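/- arXiv:1505.02150 — 3 statements merged into one kernel-verified Lean document; each statement's English description precedes it below -/
import Mathlib

section
/- For every ε > 0 there exists a constant C(ε) > 0 such that for all real X ≥ 1 and all positive integers q ≤ X, the number of positive integers n ≤ X having the same set of prime divisors as q (that is, with rad(n) = rad(q)) is at most C(ε) X^{ε}. -/
open scoped BigOperators

/-- `e(x) = exp(2 π i x)`. -/
noncomputable def eC (x : ℝ) : ℂ := Complex.exp (2 * Real.pi * Complex.I * x)

/-- The GL(3) long-element Kloosterman sum `S(m₁,m₂,n₁,n₂;D₁,D₂)`.
Since the summand is independent of the admissible choices of `Y₁,Z₁,Y₂,Z₂`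
(and each admissible `(B₁,C₁)` has exactly `D₁` admissible pairs `(Y₁,Z₁)` modulo `D₁`,
similarly for `(Y₂,Z₂)`), we define the sum by averaging over all admissible choices. -/
noncomputable def SGL3 (m1 m2 n1 n2 : ℤ) (D1 D2 : ℕ) : ℂ :=
  ((D1 : ℂ) * (D2 : ℂ))⁻¹ *
    ∑ B1 ∈ Finset.range D1, ∑ C1 ∈ Finset.range D1,
      ∑ B2 ∈ Finset.range D2, ∑ C2 ∈ Finset.range D2,
        ∑ Y1 ∈ Finset.range D1, ∑ Z1 ∈ Finset.range D1,
          ∑ Y2 ∈ Finset.range D2, ∑ Z2 ∈ Finset.range D2,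
            if Nat.gcd B1 (Nat.gcd C1 D1) = 1 ∧ Nat.gcd B2 (Nat.gcd C2 D2) = 1 ∧
                ((D1 : ℤ) * (D2 : ℤ)) ∣ ((D1 : ℤ) * (C2 : ℤ) + (B1 : ℤ) * (B2 : ℤ) + (C1 : ℤ) * (D2 : ℤ)) ∧
                (D1 : ℤ) ∣ ((Y1 : ℤ) * (B1 : ℤ) + (Z1 : ℤ) * (C1 : ℤ) - 1) ∧
                (D2 : ℤ) ∣ ((Y2 : ℤ) * (B2 : ℤ) + (Z2 : ℤ) * (C2 : ℤ) - 1) then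
              eC (((m1 * (B1 : ℤ) + n1 * ((Y1 : ℤ) * (D2 : ℤ) - (Z1 : ℤ) * (B2 : ℤ)) : ℤ) : ℝ) / (D1 : ℝ)) *
                eC (((m2 * (B2 : ℤ) + n2 * ((Y2 : ℤ) * (D1 : ℤ) - (Z2 : ℤ) * (B1 : ℤ)) : ℤ) : ℝ) / (D2 : ℝ))
            else 0

/-- The classical Kloosterman sum `S(m,n;c) = ∑_{x (c), (x,c)=1} e((m x + n x̄)/c)`. -/
noncomputable def Kl (m n : ℤ) (c : ℕ) : ℂ :=
  ∑ x ∈ Finset.range c,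
    if Nat.gcd x c = 1 then
      eC (((m * (x : ℤ) + n * ((((x : ZMod c)⁻¹).val : ℕ) : ℤ) : ℤ) : ℝ) / (c : ℝ))
    else 0

/-- The partial (middle two-variable) Fourier transform of the GL(3) Kloosterman sum. -/
noncomputable def Shat (a u t b : ℤ) (D1 D2 : ℕ) : ℂ :=
  ((D1 : ℂ) * (D2 : ℂ))⁻¹ *
    ∑ x ∈ Finset.range D1, ∑ y ∈ Finset.range D2,
      SGL3 a (y : ℤ) (x : ℤ) b D1 D2 * eC (((-((x : ℤ) * t) : ℤ) : ℝ) / (D1 : ℝ)) *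
        eC (((-((y : ℤ) * u) : ℤ) : ℝ) / (D2 : ℝ))

/-- `R(t,D₁,D₂) = max_{(ab,D₁)=1} ∑_{u (D₂)} |Ŝ(a,u,bt,1,D₁,D₂)|`, realized as a supremum. -/
noncomputable def Rfun (t : ℤ) (D1 D2 : ℕ) : ℝ :=
  sSup {r : ℝ | ∃ a b : ℤ, Int.gcd (a * b) D1 = 1 ∧
    r = ∑ u ∈ Finset.range D2, ‖Shat a (u : ℤ) (b * t) 1 D1 D2‖}

/-- The quantity `M(β)` with outer sum over `q ≤ Q` and moduli `c ≤ X/q`. -/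
noncomputable def Mgen (Q X : ℝ) (β : ℕ → ℂ) : ℝ :=
  ∑ q ∈ Finset.Icc 1 ⌊Q⌋₊, ∑ d1 ∈ q.divisors,
    ((d1 : ℝ) / (q : ℝ)) *
      ∑ c ∈ Finset.Icc 1 ⌊X / (q : ℝ)⌋₊,
        if Nat.gcd c q = 1 then
          ∑ tt ∈ Finset.range c,
            if Nat.gcd tt c = 1 then
              (‖∑ᶠ (n : ℕ) (_ : Nat.gcd n q = d1),
                β n * eC (((tt * n : ℕ) : ℝ) / (c : ℝ))‖) ^ 2
            else 0
        else 0

/-- The bilinear form `𝒮 = ∑_{D₁,D₂,m,n} γ_{D₁,D₂} α_m β_n S(1,m,n,1;D₁,D₂)`. -/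
noncomputable def Sbil (γ : ℕ → ℕ → ℂ) (α β : ℕ → ℂ) : ℂ :=
  ∑ᶠ (D1 : ℕ) (D2 : ℕ) (m : ℕ) (n : ℕ),
    γ D1 D2 * α m * β n * SGL3 1 (m : ℤ) (n : ℤ) 1 D1 D2

/-- `‖β‖ = (∑_n |β_n|²)^{1/2}`. -/
noncomputable def seqNorm (β : ℕ → ℂ) : ℝ := Real.sqrt (∑ᶠ n : ℕ, ‖β n‖ ^ 2)

/-- Divisor-type bound: the number of `n ≤ X` with the same set of prime divisors
as `q` is `≪_ε X^ε`. -/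
theorem count_same_prime_divisors (ε : ℝ) (hε : 0 < ε) :
    ∃ C : ℝ, 0 < C ∧ ∀ X : ℝ, 1 ≤ X → ∀ q : ℕ, 0 < q → (q : ℝ) ≤ X →
      (((Finset.Icc 1 ⌊X⌋₊).filter (fun n => n.primeFactors = q.primeFactors)).card : ℝ) ≤
        C * X ^ ε := by
    classical
  set r0 : ℝ := (2 : ℝ) ^ (-ε) with hr0def
  have hr0pos : 0 < r0 := Real.rpow_pos_of_pos (by norm_num) _
  have hr0lt : r0 < 1 := Real.rpow_lt_one_of_one_lt_of_neg (by norm_num) (by linarith)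
  set C0 : ℝ := max 1 (r0 / (1 - r0)) with hC0def
  have hC0one : (1 : ℝ) ≤ C0 := le_max_left _ _
  set K : ℕ := ⌈(2 : ℝ) ^ (1 / ε)⌉₊ with hKdef
  refine ⟨C0 ^ K, by positivity, ?_⟩
  intro X hX q hq hqX
  set T := (Finset.Icc 1 ⌊X⌋₊).filter (fun n => n.primeFactors = q.primeFactors) with hT
  set S := q.primeFactors with hS
  set A := ⌊X⌋₊ with hA
  have hXpos : (0 : ℝ) < X := by linarith
  -- basic facts about members of T
  have hTmem : ∀ n ∈ T, 1 ≤ n ∧ n ≤ A ∧ n.primeFactors = S := by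
    intro n hn
    rw [hT, Finset.mem_filter, Finset.mem_Icc] at hn
    exact ⟨hn.1.1, hn.1.2, hn.2⟩
  have hAX : (A : ℝ) ≤ X := Nat.floor_le (le_of_lt hXpos)
  -- r p for primes
  have hprime : ∀ p ∈ S, p.Prime := fun p hp => Nat.prime_of_mem_primeFactors hp
  -- Step 1 : card ≤ X^ε * ∑ n^{-ε}
  have step1 : (T.card : ℝ) ≤ X ^ ε * ∑ n ∈ T, (n : ℝ) ^ (-ε) := by
    rw [Finset.mul_sum, Finset.card_eq_sum_ones, Nat.cast_sum]
    apply Finset.sum_le_sum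
    intro n hn
    obtain ⟨h1, h2, _⟩ := hTmem n hn
    have hn0 : (0 : ℝ) < (n : ℝ) := by exact_mod_cast h1
    have hnX : (n : ℝ) ≤ X := le_trans (by exact_mod_cast h2) hAX
    rw [Real.rpow_neg (le_of_lt hn0), ← div_eq_mul_inv]
    rw [le_div_iff₀ (Real.rpow_pos_of_pos hn0 _)]
    push_cast
    rw [one_mul]
    exact Real.rpow_le_rpow (le_of_lt hn0) hnX (le_of_lt hε)
  -- Step 2 : ∑_{n∈T} n^{-ε} ≤ ∏_{p∈S} ∑_{a∈Icc 1 A} ((p:ℝ)^(-ε))^a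
  have step2 : ∑ n ∈ T, (n : ℝ) ^ (-ε) ≤
      ∏ p ∈ S, ∑ a ∈ Finset.Icc 1 A, ((p : ℝ) ^ (-ε)) ^ a := by
    rw [Finset.prod_sum]
    set F : ∀ n : ℕ, ∀ p ∈ S, ℕ := fun n p _ => n.factorization p with hF
    have hrepr : ∀ n ∈ T, n = ∏ p ∈ S, p ^ n.factorization p := by
      intro n hn
      obtain ⟨h1, _, h3⟩ := hTmem n hn
      conv_lhs => rw [← Nat.factorization_prod_pow_eq_self (Nat.one_le_iff_ne_zero.mp h1)]
      rw [Finsupp.prod, Nat.support_factorization, h3]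
    have hinj : ∀ n ∈ T, ∀ m ∈ T, F n = F m → n = m := by
      intro n hn m hm hFe
      rw [hrepr n hn, hrepr m hm]
      apply Finset.prod_congr rfl
      intro p hp
      have h := congrFun (congrFun hFe p) hp
      simp only [hF] at h
      rw [h]
    have hmem : ∀ n ∈ T, F n ∈ S.pi (fun _ => Finset.Icc 1 A) := by
      intro n hn
      obtain ⟨h1, h2, h3⟩ := hTmem n hn
      rw [Finset.mem_pi]
      intro p hp
      rw [Finset.mem_Icc]
      constructor
      · have : p ∈ n.primeFactors := by rw [h3]; exact hp
        rw [← Nat.support_factorization, Finsupp.mem_support_iff] at this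
        exact Nat.one_le_iff_ne_zero.mpr this
      · exact le_trans (le_of_lt (Nat.factorization_lt p (Nat.one_le_iff_ne_zero.mp h1))) h2
    have hval : ∀ n ∈ T,
        (n : ℝ) ^ (-ε) = ∏ x ∈ S.attach, (((x : ℕ) : ℝ) ^ (-ε)) ^ (F n x.1 x.2) := by
      intro n hn
      have : ∏ x ∈ S.attach, (((x : ℕ) : ℝ) ^ (-ε)) ^ (F n x.1 x.2)
          = ∏ p ∈ S, ((p : ℝ) ^ (-ε)) ^ (n.factorization p) := by
        rw [← Finset.prod_attach S (fun p => ((p : ℝ) ^ (-ε)) ^ (n.factorization p))]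
      rw [this]
      conv_lhs => rw [hrepr n hn]
      push_cast
      rw [← Real.finset_prod_rpow S _ (fun p _ => by positivity) (-ε)]
      apply Finset.prod_congr rfl
      intro p hp
      rw [← Real.rpow_natCast ((p : ℝ) ^ (-ε)) (n.factorization p),
        ← Real.rpow_natCast (p : ℝ) (n.factorization p),
        ← Real.rpow_mul (by positivity), ← Real.rpow_mul (by positivity), mul_comm]
    calc ∑ n ∈ T, (n : ℝ) ^ (-ε)
        = ∑ n ∈ T, ∏ x ∈ S.attach, (((x : ℕ) : ℝ) ^ (-ε)) ^ (F n x.1 x.2) :=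
          Finset.sum_congr rfl hval
      _ = ∑ t ∈ T.image F, ∏ x ∈ S.attach, (((x : ℕ) : ℝ) ^ (-ε)) ^ (t x.1 x.2) :=
          (Finset.sum_image (f := fun t : ∀ p ∈ S, ℕ =>
            ∏ x ∈ S.attach, (((x : ℕ) : ℝ) ^ (-ε)) ^ (t x.1 x.2)) hinj).symm
      _ ≤ ∑ t ∈ S.pi (fun _ => Finset.Icc 1 A),
            ∏ x ∈ S.attach, (((x : ℕ) : ℝ) ^ (-ε)) ^ (t x.1 x.2) := by
          apply Finset.sum_le_sum_of_subset_of_nonneg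
          · intro t ht
            obtain ⟨n, hn, rfl⟩ := Finset.mem_image.mp ht
            exact hmem n hn
          · intro t _ _
            apply Finset.prod_nonneg
            intro x _
            positivity
  -- Step 3 : each inner sum is at most r_p/(1-r_p)
  have step3 : ∀ p ∈ S, ∑ a ∈ Finset.Icc 1 A, ((p : ℝ) ^ (-ε)) ^ a ≤
      ((p : ℝ) ^ (-ε)) / (1 - (p : ℝ) ^ (-ε)) := by
    intro p hp
    have hp2 : (2 : ℝ) ≤ (p : ℝ) := by exact_mod_cast (hprime p hp).two_le
    have hrpos : (0 : ℝ) ≤ (p : ℝ) ^ (-ε) := Real.rpow_nonneg (by linarith) _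
    have hrlt : (p : ℝ) ^ (-ε) < 1 :=
      Real.rpow_lt_one_of_one_lt_of_neg (by linarith) (by linarith)
    calc ∑ a ∈ Finset.Icc 1 A, ((p : ℝ) ^ (-ε)) ^ a
        = ∑ a ∈ Finset.Ico 1 (A + 1), ((p : ℝ) ^ (-ε)) ^ a := by
          rw [Finset.Ico_add_one_right_eq_Icc]
      _ ≤ ((p : ℝ) ^ (-ε)) ^ 1 / (1 - (p : ℝ) ^ (-ε)) :=
          geom_sum_Ico_le_of_lt_one hrpos hrlt
      _ = ((p : ℝ) ^ (-ε)) / (1 - (p : ℝ) ^ (-ε)) := by rw [pow_one]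
  -- Step 4 : product of the g p is at most C0^K
  have step4 : ∏ p ∈ S, ((p : ℝ) ^ (-ε)) / (1 - (p : ℝ) ^ (-ε)) ≤ C0 ^ K := by
    have hg : ∀ p ∈ S, (0 : ℝ) ≤ ((p : ℝ) ^ (-ε)) / (1 - (p : ℝ) ^ (-ε)) := by
      intro p hp
      have hp2 : (2 : ℝ) ≤ (p : ℝ) := by exact_mod_cast (hprime p hp).two_le
      have hrlt : (p : ℝ) ^ (-ε) < 1 :=
        Real.rpow_lt_one_of_one_lt_of_neg (by linarith) (by linarith)
      have hrpos : (0 : ℝ) ≤ (p : ℝ) ^ (-ε) := Real.rpow_nonneg (by linarith) _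
      exact div_nonneg hrpos (by linarith)
    rw [← Finset.prod_filter_mul_prod_filter_not S (fun p => p < K)]
    have hsmall : ∏ p ∈ S.filter (fun p => p < K),
        ((p : ℝ) ^ (-ε)) / (1 - (p : ℝ) ^ (-ε)) ≤ C0 ^ K := by
      calc ∏ p ∈ S.filter (fun p => p < K), ((p : ℝ) ^ (-ε)) / (1 - (p : ℝ) ^ (-ε))
          ≤ ∏ _p ∈ S.filter (fun p => p < K), C0 := by
            apply Finset.prod_le_prod
            · intro p hp; exact hg p (Finset.mem_filter.mp hp).1
            · intro p hp
              have hpS := (Finset.mem_filter.mp hp).1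
              have hp2 : (2 : ℝ) ≤ (p : ℝ) := by exact_mod_cast (hprime p hpS).two_le
              have hrp : (p : ℝ) ^ (-ε) ≤ r0 :=
                Real.rpow_le_rpow_of_nonpos (by norm_num) hp2 (by linarith)
              have hrpos : (0 : ℝ) ≤ (p : ℝ) ^ (-ε) := Real.rpow_nonneg (by linarith) _
              refine le_trans ?_ (le_max_right 1 (r0 / (1 - r0)))
              apply div_le_div₀ hr0pos.le hrp (by linarith) (by linarith)
        _ = C0 ^ (S.filter (fun p => p < K)).card := Finset.prod_const C0
        _ ≤ C0 ^ K := by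
            apply pow_le_pow_right₀ hC0one
            calc (S.filter (fun p => p < K)).card ≤ (Finset.range K).card := by
                  apply Finset.card_le_card
                  intro p hp
                  exact Finset.mem_range.mpr (Finset.mem_filter.mp hp).2
              _ = K := Finset.card_range K
    have hlarge : ∏ p ∈ S.filter (fun p => ¬ p < K),
        ((p : ℝ) ^ (-ε)) / (1 - (p : ℝ) ^ (-ε)) ≤ 1 := by
      apply Finset.prod_le_one
      · intro p hp; exact hg p (Finset.mem_filter.mp hp).1
      · intro p hp
        obtain ⟨hpS, hpK⟩ := Finset.mem_filter.mp hp
        have hp2 : (2 : ℝ) ≤ (p : ℝ) := by exact_mod_cast (hprime p hpS).two_le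
        have hpK' : (2 : ℝ) ^ (1 / ε) ≤ (p : ℝ) := by
          calc (2 : ℝ) ^ (1 / ε) ≤ (K : ℝ) := Nat.le_ceil _
            _ ≤ (p : ℝ) := by exact_mod_cast not_lt.mp hpK
        have h2p : (2 : ℝ) ≤ (p : ℝ) ^ ε := by
          calc (2 : ℝ) = ((2 : ℝ) ^ (1 / ε)) ^ ε := by
                rw [← Real.rpow_mul (by norm_num), one_div,
                  inv_mul_cancel₀ (ne_of_gt hε), Real.rpow_one]
            _ ≤ (p : ℝ) ^ ε := Real.rpow_le_rpow (by positivity) hpK' hε.le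
        have hr : (p : ℝ) ^ (-ε) ≤ 1 / 2 := by
          rw [Real.rpow_neg (by linarith)]
          rw [inv_eq_one_div]
          apply div_le_div_of_nonneg_left (by norm_num) (by norm_num) h2p
        have hrlt : (p : ℝ) ^ (-ε) < 1 :=
          Real.rpow_lt_one_of_one_lt_of_neg (by linarith) (by linarith)
        rw [div_le_one (by linarith)]
        linarith
    have hsm0 : (0 : ℝ) ≤ ∏ p ∈ S.filter (fun p => p < K),
        ((p : ℝ) ^ (-ε)) / (1 - (p : ℝ) ^ (-ε)) :=
      Finset.prod_nonneg fun p hp => hg p (Finset.mem_filter.mp hp).1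
    calc _ ≤ C0 ^ K * 1 := by
          apply mul_le_mul hsmall hlarge
            (Finset.prod_nonneg fun p hp => hg p (Finset.mem_filter.mp hp).1) (by positivity)
      _ = C0 ^ K := mul_one _
  -- combine
  have hsumle : ∑ n ∈ T, (n : ℝ) ^ (-ε) ≤ C0 ^ K := by
    refine le_trans step2 (le_trans ?_ step4)
    apply Finset.prod_le_prod
    · intro p hp
      apply Finset.sum_nonneg
      intro a _
      positivity
    · exact step3
  calc (T.card : ℝ) ≤ X ^ ε * ∑ n ∈ T, (n : ℝ) ^ (-ε) := step1
    _ ≤ X ^ ε * C0 ^ K := by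
        apply mul_le_mul_of_nonneg_left hsumle (Real.rpow_nonneg hXpos.le _)
    _ = C0 ^ K * X ^ ε := mul_comm _ _
end

section
/- There exists an absolute constant C > 0 with the following property. For all real B ≥ 1 and Y ≥ 1, all integers N and M ≥ 1, and all complex numbers b_m (N ≤ m < N + M): ∫_1^2 Σ_{b ≤ B} Σ_{x mod b, gcd(x,b)=1} | Σ_{N ≤ m < N+M} b_m e(xm/b) e(tm/Y) |² dt ≤ C (B² + Y) Σ_{N ≤ m < N+M} |b_m|². -/
open scoped BigOperators

lemma eC_add (x y : ℝ) : eC (x + y) = eC x * eC y := by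
  simp [eC, ← Complex.exp_add]; ring_nf

lemma eC_eq (x : ℝ) : eC x = Complex.exp ((2 * Real.pi * Complex.I) * (x:ℂ)) := rfl

lemma conj_eC (x : ℝ) : (starRingEnd ℂ) (eC x) = eC (-x) := by
  rw [eC_eq, eC_eq, ← Complex.exp_conj]
  congr 1
  rw [map_mul, map_mul, map_mul, Complex.conj_I, Complex.conj_ofReal, Complex.conj_ofReal,
    show (starRingEnd ℂ) 2 = 2 from map_ofNat _ 2]
  push_cast
  ring

lemma cont_eC (c : ℝ) : Continuous (fun u : ℝ => eC (c * u)) := by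
  simp only [eC_eq]
  fun_prop

lemma integral_eC (c : ℤ) (hc : c ≠ 0) : ∫ u in (0:ℝ)..3, eC (c * u) = 0 := by
  simp only [eC_eq]
  have h2 : (2 * Real.pi * Complex.I : ℂ) * c ≠ 0 := by
    simp [Real.pi_ne_zero, Complex.I_ne_zero, hc]
  have h3 := integral_exp_mul_complex (a := (0:ℝ)) (b := 3) h2
  rw [show (∫ u in (0:ℝ)..3, Complex.exp ((2 * Real.pi * Complex.I) * ((c:ℝ) * u : ℝ))) = ∫ u in (0:ℝ)..3, Complex.exp ((2 * Real.pi * Complex.I * c) * (u:ℝ)) by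
    congr 1; funext u; push_cast; ring_nf]
  rw [h3]
  rw [show (2 * Real.pi * Complex.I * c) * ((3:ℝ):ℂ) = (3*c : ℤ) * (2 * Real.pi * Complex.I) by push_cast; ring]
  rw [Complex.exp_int_mul_two_pi_mul_I]
  simp

lemma integral_eC' (c : ℤ) : (∫ u in (0:ℝ)..3, eC (c * u)) = if c = 0 then 3 else 0 := by
  by_cases hc : c = 0
  · simp [hc, eC]
  · simp [hc, integral_eC c hc]

set_option maxHeartbeats 2000000 in
lemma parseval (N : ℤ) (M : ℕ) (b : ℤ → ℂ) :
    (∫ u in (0:ℝ)..3,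
        ‖∑ m ∈ Finset.range M, b (N + m) * eC (((N + m : ℤ) : ℝ) * u)‖ ^ 2)
      = 3 * ∑ m ∈ Finset.range M, ‖b (N + m)‖ ^ 2 := by
  set F : ℝ → ℂ := fun u => ∑ m ∈ Finset.range M, b (N + m) * eC (((N + m : ℤ) : ℝ) * u) with hF
  set G : ℕ → ℕ → ℝ → ℂ := fun m n u =>
    (b (N + m) * (starRingEnd ℂ) (b (N + n))) * eC ((((m : ℤ) - n : ℤ) : ℝ) * u) with hG
  have key : ∀ u : ℝ, ((‖F u‖ ^ 2 : ℝ) : ℂ)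
      = ∑ m ∈ Finset.range M, ∑ n ∈ Finset.range M, G m n u := by
    intro u
    rw [show ((‖F u‖ ^ 2 : ℝ) : ℂ) = F u * (starRingEnd ℂ) (F u) by
      rw [Complex.mul_conj, Complex.sq_norm], hF]
    rw [map_sum, Finset.sum_mul_sum]
    refine Finset.sum_congr rfl fun m _ => Finset.sum_congr rfl fun n _ => ?_
    rw [hG]
    simp only
    rw [map_mul, conj_eC]
    rw [show (((m : ℤ) - n : ℤ) : ℝ) * u = ((N + m : ℤ) : ℝ) * u + (-(((N + n : ℤ) : ℝ) * u)) by
      push_cast; ring]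
    rw [eC_add]
    ring_nf
  have hicont : ∀ m n : ℕ, IntervalIntegrable (G m n) MeasureTheory.volume 0 3 := fun m n =>
    (Continuous.mul continuous_const (cont_eC _)).intervalIntegrable _ _
  have hGint : ∀ m n : ℕ, (∫ u in (0:ℝ)..3, G m n u)
      = if m = n then (3:ℂ) * (‖b (N + m)‖ ^ 2 : ℝ) else 0 := by
    intro m n
    rw [hG]
    simp only
    rw [intervalIntegral.integral_const_mul, integral_eC']
    by_cases h : m = n
    · subst h
      simp [Complex.mul_conj, Complex.sq_norm]
      ring
    · have : ((m : ℤ) - n) ≠ 0 := sub_ne_zero.2 (by exact_mod_cast h)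
      simp [this, h]
  have hint : (∫ u in (0:ℝ)..3, ((‖F u‖ ^ 2 : ℝ) : ℂ))
      = ((3 * ∑ m ∈ Finset.range M, ‖b (N + m)‖ ^ 2 : ℝ) : ℂ) := by
    rw [intervalIntegral.integral_congr (fun u _ => key u)]
    rw [intervalIntegral.integral_finset_sum (μ := MeasureTheory.volume) (a := (0:ℝ)) (b := 3)
      (s := Finset.range M) (f := fun m u => ∑ n ∈ Finset.range M, G m n u)
      (fun m _ => ((continuous_finset_sum _ (fun n _ => (continuous_const.mul (cont_eC _) : Continuous (G m n)))).intervalIntegrable _ _))]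
    have : ∀ m ∈ Finset.range M, (∫ u in (0:ℝ)..3, ∑ n ∈ Finset.range M, G m n u)
        = ∑ n ∈ Finset.range M, ∫ u in (0:ℝ)..3, G m n u :=
      fun m _ => intervalIntegral.integral_finset_sum (fun n _ => hicont m n)
    rw [Finset.sum_congr rfl this]
    push_cast
    rw [Finset.mul_sum]
    refine Finset.sum_congr rfl fun m hm => ?_
    rw [Finset.sum_congr rfl (fun n _ => hGint m n), Finset.sum_ite_eq (Finset.range M) m]
    simp only [hm, if_pos]
    push_cast
    ring
  rw [intervalIntegral.integral_ofReal] at hint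
  exact_mod_cast hint

lemma frac_inj {q q' x x' : ℕ} (hq : 1 ≤ q) (hq' : 1 ≤ q')
    (h1 : Nat.gcd x q = 1) (h2 : Nat.gcd x' q' = 1)
    (h : (x : ℝ) / q = (x' : ℝ) / q') : q = q' ∧ x = x' := by
  have hq0 : (q : ℝ) ≠ 0 := by positivity
  have hq'0 : (q' : ℝ) ≠ 0 := by positivity
  have hmul : (x : ℝ) * q' = (x' : ℝ) * q := by
    field_simp at h
    linarith [h]
  have hnat : x * q' = x' * q := by exact_mod_cast hmul
  have hco : Nat.Coprime q x := (Nat.coprime_comm.mp h1)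
  have hco' : Nat.Coprime q' x' := (Nat.coprime_comm.mp h2)
  have hdvd : q ∣ q' := by
    have : q ∣ x * q' := hnat ▸ Dvd.intro_left x' rfl
    exact hco.dvd_of_dvd_mul_left this
  have hdvd' : q' ∣ q := by
    have : q' ∣ x' * q := hnat ▸ Dvd.intro_left x rfl
    exact hco'.dvd_of_dvd_mul_left this
  have hqq : q = q' := Nat.dvd_antisymm hdvd hdvd'
  refine ⟨hqq, ?_⟩
  subst hqq
  have := Nat.eq_of_mul_eq_mul_right (lt_of_lt_of_le Nat.zero_lt_one hq) hnat
  exact this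

lemma frac_gap {q q' x x' : ℕ} (hq : 1 ≤ q) (hq' : 1 ≤ q')
    (hne : (x : ℝ) / q ≠ (x' : ℝ) / q') :
    1 / ((q : ℝ) * q') ≤ |(x : ℝ) / q - (x' : ℝ) / q'| := by
  have hq0 : (0 : ℝ) < q := by exact_mod_cast hq
  have hq'0 : (0 : ℝ) < q' := by exact_mod_cast hq'
  have key : (x : ℝ) / q - (x' : ℝ) / q' = ((x * q' : ℤ) - (x' * q : ℤ)) / ((q : ℝ) * q') := by
    push_cast
    field_simp
  have hz : ((x * q' : ℤ) - (x' * q : ℤ)) ≠ 0 := by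
    intro h0
    apply hne
    rw [div_eq_div_iff hq0.ne' hq'0.ne']
    have : ((x * q' : ℤ) : ℝ) = ((x' * q : ℤ) : ℝ) := by
      exact_mod_cast sub_eq_zero.mp h0
    push_cast at this
    linarith
  have h1 : (1 : ℝ) ≤ |(((x * q' : ℤ) - (x' * q : ℤ)) : ℝ)| := by
    have h2 := Int.one_le_abs hz
    calc (1:ℝ) ≤ ((|x * q' - x' * q| : ℤ) : ℝ) := by exact_mod_cast h2
    _ = |(((x * q' : ℤ) - (x' * q : ℤ)) : ℝ)| := by push_cast; simp
  rw [key, abs_div, abs_of_pos (by positivity : (0:ℝ) < (q : ℝ) * q')]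
  rw [div_le_div_iff₀ (by positivity) (by positivity)]
  have := mul_le_mul_of_nonneg_right h1 (le_of_lt (mul_pos hq0 hq'0))
  linarith

lemma count_le (B Y u : ℝ) (hB : 1 ≤ B) (hY : 1 ≤ Y) :
    ((((Finset.Icc 1 ⌊B⌋₊).sigma (fun q => (Finset.range q).filter (fun x => Nat.gcd x q = 1))).filter
      (fun p => u ∈ Set.Ioc (((p.2 : ℝ)) / p.1 + 1 / Y) (((p.2 : ℝ)) / p.1 + 2 / Y))).card : ℝ)
      ≤ B ^ 2 / Y + 1 := by
  have hB0 : (0:ℝ) < B := by linarith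
  have hY0 : (0:ℝ) < Y := by linarith
  set S := (((Finset.Icc 1 ⌊B⌋₊).sigma (fun q => (Finset.range q).filter (fun x => Nat.gcd x q = 1))).filter
      (fun p => u ∈ Set.Ioc (((p.2 : ℝ)) / p.1 + 1 / Y) (((p.2 : ℝ)) / p.1 + 2 / Y))) with hS
  have hmem : ∀ p ∈ S, 1 ≤ p.1 ∧ (p.1 : ℝ) ≤ B ∧ Nat.gcd p.2 p.1 = 1 ∧
      u - 2/Y ≤ (p.2 : ℝ) / p.1 ∧ (p.2 : ℝ) / p.1 < u - 1/Y := by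
    intro p hp
    rw [hS, Finset.mem_filter, Finset.mem_sigma] at hp
    obtain ⟨⟨hq, hx⟩, hu⟩ := hp
    rw [Finset.mem_Icc] at hq
    rw [Finset.mem_filter] at hx
    obtain ⟨hu1, hu2⟩ := hu
    refine ⟨hq.1, ?_, hx.2, by linarith, by linarith⟩
    calc (p.1 : ℝ) ≤ ⌊B⌋₊ := by exact_mod_cast hq.2
    _ ≤ B := Nat.floor_le (le_of_lt hB0)
  have hval : ∀ p ∈ S, 0 ≤ ((p.2 : ℝ) / p.1 - u + 2/Y) * B^2 ∧
      ((p.2 : ℝ) / p.1 - u + 2/Y) * B^2 < B^2 / Y := by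
    intro p hp
    obtain ⟨h1, h2, h3, h4, h5⟩ := hmem p hp
    constructor
    · have : (0:ℝ) ≤ (p.2 : ℝ) / p.1 - u + 2/Y := by linarith
      positivity
    · have h6 : (p.2 : ℝ) / p.1 - u + 2/Y < 1/Y := by
        have : (2:ℝ)/Y = 1/Y + 1/Y := by ring
        linarith
      calc ((p.2 : ℝ) / p.1 - u + 2/Y) * B^2 < (1/Y) * B^2 :=
        mul_lt_mul_of_pos_right h6 (by positivity)
      _ = B^2 / Y := by ring
  have hcard : S.card ≤ ⌊B^2/Y⌋₊ + 1 := by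
    have := Finset.card_le_card_of_injOn (s := S)
      (f := fun p : (_ : ℕ) × ℕ => ⌊((p.2 : ℝ) / p.1 - u + 2/Y) * B^2⌋₊)
      (t := Finset.range (⌊B^2/Y⌋₊ + 1)) ?_ ?_
    · simpa [Finset.card_range] using this
    · intro p hp
      rw [Finset.mem_coe, Finset.mem_range, Nat.lt_succ_iff]
      exact Nat.floor_le_floor (le_of_lt (hval p hp).2)
    · intro p hp p' hp' hfe
      obtain ⟨hq1, hqB, hco, hlo, hhi⟩ := hmem p hp
      obtain ⟨hq1', hqB', hco', hlo', hhi'⟩ := hmem p' hp'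
      by_contra hne
      have hfrac : (p.2 : ℝ) / p.1 ≠ (p'.2 : ℝ) / p'.1 := by
        intro h
        obtain ⟨e1, e2⟩ := frac_inj hq1 hq1' hco hco' h
        exact hne (Sigma.ext e1 (heq_of_eq e2))
      have hgap : 1 / ((p.1 : ℝ) * p'.1) ≤ |(p.2 : ℝ) / p.1 - (p'.2 : ℝ) / p'.1| :=
        frac_gap hq1 hq1' hfrac
      have hgap2 : 1 / B^2 ≤ |(p.2 : ℝ) / p.1 - (p'.2 : ℝ) / p'.1| := by
        refine le_trans ?_ hgap
        rw [div_le_div_iff₀ (by positivity) (by positivity)]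
        have : (p.1 : ℝ) * p'.1 ≤ B^2 := by nlinarith [hqB, hqB',
          (by exact_mod_cast Nat.one_le_cast.mpr hq1 : (1:ℝ) ≤ (p.1:ℝ)),
          (by exact_mod_cast Nat.one_le_cast.mpr hq1' : (1:ℝ) ≤ (p'.1:ℝ))]
        linarith
      set a := ((p.2 : ℝ) / p.1 - u + 2/Y) * B^2 with ha
      set a' := ((p'.2 : ℝ) / p'.1 - u + 2/Y) * B^2 with ha'
      have hdiff : 1 ≤ |a - a'| := by
        rw [ha, ha', show ((p.2 : ℝ) / p.1 - u + 2/Y) * B^2 - ((p'.2 : ℝ) / p'.1 - u + 2/Y) * B^2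
          = ((p.2 : ℝ) / p.1 - (p'.2 : ℝ) / p'.1) * B^2 by ring, abs_mul,
          abs_of_pos (by positivity : (0:ℝ) < B^2)]
        calc (1:ℝ) = (1/B^2) * B^2 := by field_simp
        _ ≤ |(p.2 : ℝ) / p.1 - (p'.2 : ℝ) / p'.1| * B^2 :=
          mul_le_mul_of_nonneg_right hgap2 (by positivity)
      have h0a : 0 ≤ a := (hval p hp).1
      have h0a' : 0 ≤ a' := (hval p' hp').1
      have hfl : ⌊a⌋₊ = ⌊a'⌋₊ := hfe
      have l1 : (⌊a⌋₊ : ℝ) ≤ a := Nat.floor_le h0a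
      have l2 : a < ⌊a⌋₊ + 1 := Nat.lt_floor_add_one a
      have l3 : (⌊a'⌋₊ : ℝ) ≤ a' := Nat.floor_le h0a'
      have l4 : a' < ⌊a'⌋₊ + 1 := Nat.lt_floor_add_one a'
      rw [hfl] at l1 l2
      rcases abs_cases (a - a') with ⟨h, _⟩ | ⟨h, _⟩ <;> rw [h] at hdiff <;> linarith
  calc (S.card : ℝ) ≤ (⌊B^2/Y⌋₊ : ℝ) + 1 := by exact_mod_cast hcard
  _ ≤ B^2/Y + 1 := by
    have : (⌊B^2/Y⌋₊ : ℝ) ≤ B^2/Y := Nat.floor_le (by positivity)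
    linarith


section
open MeasureTheory
set_option maxHeartbeats 2000000 in
/-- A hybrid large sieve inequality. -/
theorem hybrid_large_sieve :
    ∃ C : ℝ, 0 < C ∧ ∀ (B Y : ℝ), 1 ≤ B → 1 ≤ Y → ∀ (N : ℤ) (M : ℕ), 1 ≤ M →
      ∀ b : ℤ → ℂ,
        (∫ t in (1 : ℝ)..2,
          ∑ q ∈ Finset.Icc 1 ⌊B⌋₊,
            ∑ x ∈ (Finset.range q).filter (fun x => Nat.gcd x q = 1),
              (‖∑ m ∈ Finset.range M,
                b (N + m) * eC ((((x : ℤ) * (N + m) : ℤ) : ℝ) / (q : ℝ)) *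
                  eC (t * (((N + m : ℤ)) : ℝ) / Y)‖) ^ 2) ≤
        C * (B ^ 2 + Y) * ∑ m ∈ Finset.range M, ‖b (N + m)‖ ^ 2 := by
  classical
  refine ⟨3, by norm_num, ?_⟩
  intro B Y hB hY N M hM b
  have hB0 : (0:ℝ) < B := by linarith
  have hY0 : (0:ℝ) < Y := by linarith
  set F : ℝ → ℂ := fun u => ∑ m ∈ Finset.range M, b (N + m) * eC (((N + m : ℤ) : ℝ) * u) with hF
  set h : ℝ → ℝ := fun u => ‖F u‖ ^ 2 with hh
  have hcontF : Continuous F := continuous_finset_sum _ fun m _ => continuous_const.mul (cont_eC _)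
  have hconth : Continuous h := (continuous_norm.comp hcontF).pow 2
  set P := (Finset.Icc 1 ⌊B⌋₊).sigma (fun q => (Finset.range q).filter (fun x => Nat.gcd x q = 1))
    with hP
  have hPmem : ∀ p ∈ P, 1 ≤ p.1 ∧ p.2 < p.1 := by
    intro p hp
    rw [hP, Finset.mem_sigma, Finset.mem_Icc, Finset.mem_filter, Finset.mem_range] at hp
    exact ⟨hp.1.1, hp.2.1⟩
  -- Step 1: rewrite integrand
  have step1 : (∫ t in (1 : ℝ)..2,
          ∑ q ∈ Finset.Icc 1 ⌊B⌋₊,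
            ∑ x ∈ (Finset.range q).filter (fun x => Nat.gcd x q = 1),
              (‖∑ m ∈ Finset.range M,
                b (N + m) * eC ((((x : ℤ) * (N + m) : ℤ) : ℝ) / (q : ℝ)) *
                  eC (t * (((N + m : ℤ)) : ℝ) / Y)‖) ^ 2)
      = ∫ t in (1 : ℝ)..2, ∑ p ∈ P, h ((p.2 : ℝ) / p.1 + t / Y) := by
    refine intervalIntegral.integral_congr fun t _ => ?_
    rw [hP, Finset.sum_sigma]
    refine Finset.sum_congr rfl fun q _ => Finset.sum_congr rfl fun x _ => ?_
    rw [hh]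
    simp only
    congr 2
    refine Finset.sum_congr rfl fun m _ => ?_
    rw [mul_assoc, ← eC_add]
    congr 1
    push_cast
    field_simp
  rw [step1]
  -- Step 2: swap integral and sum, substitute
  have hcomp : ∀ p : (_ : ℕ) × ℕ, Continuous (fun t : ℝ => h ((p.2 : ℝ) / p.1 + t / Y)) :=
    fun p => hconth.comp (by fun_prop)
  rw [intervalIntegral.integral_finset_sum (fun p _ => (hcomp p).intervalIntegrable _ _)]
  have step2 : ∀ p ∈ P, (∫ t in (1:ℝ)..2, h ((p.2 : ℝ) / p.1 + t / Y))
      = Y * ∫ u in Set.Ioc ((p.2 : ℝ) / p.1 + 1 / Y) ((p.2 : ℝ) / p.1 + 2 / Y), h u := by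
    intro p _
    rw [intervalIntegral.integral_comp_add_div h (ne_of_gt hY0) ((p.2 : ℝ) / p.1)]
    rw [smul_eq_mul]
    congr 1
    refine intervalIntegral.integral_of_le ?_
    have h12 : (1:ℝ)/Y ≤ 2/Y := by
      rw [div_le_div_iff₀ hY0 hY0]; nlinarith
    linarith
  rw [Finset.sum_congr rfl step2]
  have hind : ∀ p : (_ : ℕ) × ℕ,
      Integrable ((Set.Ioc ((p.2 : ℝ) / p.1 + 1 / Y) ((p.2 : ℝ) / p.1 + 2 / Y)).indicator h) :=
    fun p => (hconth.integrableOn_Ioc).integrable_indicator measurableSet_Ioc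
  have hpt : ∀ u : ℝ,
      ∑ p ∈ P, (Set.Ioc ((p.2 : ℝ) / p.1 + 1 / Y) ((p.2 : ℝ) / p.1 + 2 / Y)).indicator h u
        ≤ (B ^ 2 / Y + 1) * (Set.Ioc (0:ℝ) 3).indicator h u := by
    intro u
    have h0 : 0 ≤ h u := by rw [hh]; positivity
    have hsum : ∑ p ∈ P, (Set.Ioc ((p.2 : ℝ) / p.1 + 1 / Y) ((p.2 : ℝ) / p.1 + 2 / Y)).indicator h u
        = ((P.filter (fun p => u ∈ Set.Ioc (((p.2 : ℝ)) / p.1 + 1 / Y) (((p.2 : ℝ)) / p.1 + 2 / Y))).card : ℝ) * h u := by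
      simp only [Set.indicator_apply]
      rw [← Finset.sum_filter, Finset.sum_const, nsmul_eq_mul]
    rw [hsum]
    by_cases hu : u ∈ Set.Ioc (0:ℝ) 3
    · rw [Set.indicator_of_mem hu]
      exact mul_le_mul_of_nonneg_right (count_le B Y u hB hY) h0
    · rw [Set.indicator_of_notMem hu]
      have hzero : (P.filter (fun p => u ∈ Set.Ioc (((p.2 : ℝ)) / p.1 + 1 / Y) (((p.2 : ℝ)) / p.1 + 2 / Y))).card = 0 := by
        rw [Finset.card_eq_zero, Finset.filter_eq_empty_iff]
        intro p hp hmemIoc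
        obtain ⟨hq1, hxq⟩ := hPmem p hp
        obtain ⟨hu1, hu2⟩ := hmemIoc
        apply hu
        have hq0 : (0:ℝ) < p.1 := by exact_mod_cast lt_of_lt_of_le Nat.zero_lt_one hq1
        constructor
        · have hfrac0 : (0:ℝ) ≤ (p.2 : ℝ) / p.1 := by positivity
          have hpos : (0:ℝ) < 1/Y := by positivity
          linarith
        · have hfrac1 : (p.2 : ℝ) / p.1 ≤ 1 := by
            rw [div_le_one hq0]
            exact_mod_cast le_of_lt hxq
          have h2Y : 2/Y ≤ 2 := by
            rw [div_le_iff₀ hY0]; nlinarith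
          linarith
      rw [hzero]
      simp
  have hS0 : 0 ≤ ∑ m ∈ Finset.range M, ‖b (N + m)‖ ^ 2 :=
    Finset.sum_nonneg fun m _ => by positivity
  calc ∑ p ∈ P, Y * ∫ u in Set.Ioc ((p.2 : ℝ) / p.1 + 1 / Y) ((p.2 : ℝ) / p.1 + 2 / Y), h u
      = Y * ∑ p ∈ P, ∫ u, (Set.Ioc ((p.2 : ℝ) / p.1 + 1 / Y) ((p.2 : ℝ) / p.1 + 2 / Y)).indicator h u := by
        rw [Finset.mul_sum]
        exact Finset.sum_congr rfl fun p _ => by rw [integral_indicator measurableSet_Ioc]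
    _ = Y * ∫ u, ∑ p ∈ P, (Set.Ioc ((p.2 : ℝ) / p.1 + 1 / Y) ((p.2 : ℝ) / p.1 + 2 / Y)).indicator h u := by
        rw [integral_finset_sum P (fun p _ => hind p)]
    _ ≤ Y * ∫ u, (B ^ 2 / Y + 1) * (Set.Ioc (0:ℝ) 3).indicator h u := by
        refine mul_le_mul_of_nonneg_left ?_ (le_of_lt hY0)
        exact integral_mono (integrable_finset_sum P (fun p _ => hind p))
          (((hconth.integrableOn_Ioc).integrable_indicator measurableSet_Ioc).const_mul _)
          hpt
    _ = Y * ((B ^ 2 / Y + 1) * ∫ u in Set.Ioc (0:ℝ) 3, h u) := by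
        rw [integral_const_mul, integral_indicator measurableSet_Ioc]
    _ = Y * ((B ^ 2 / Y + 1) * (3 * ∑ m ∈ Finset.range M, ‖b (N + m)‖ ^ 2)) := by
        rw [← intervalIntegral.integral_of_le (by norm_num : (0:ℝ) ≤ 3)]
        rw [show (∫ u in (0:ℝ)..3, h u) = 3 * ∑ m ∈ Finset.range M, ‖b (N + m)‖ ^ 2
          from parseval N M b]
    _ = 3 * (B ^ 2 + Y) * ∑ m ∈ Finset.range M, ‖b (N + m)‖ ^ 2 := by
        have : Y * (B ^ 2 / Y + 1) = B ^ 2 + Y := by field_simp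
        calc Y * ((B ^ 2 / Y + 1) * (3 * ∑ m ∈ Finset.range M, ‖b (N + m)‖ ^ 2))
            = (Y * (B ^ 2 / Y + 1)) * 3 * ∑ m ∈ Finset.range M, ‖b (N + m)‖ ^ 2 := by ring
          _ = 3 * (B ^ 2 + Y) * ∑ m ∈ Finset.range M, ‖b (N + m)‖ ^ 2 := by rw [this]; ring

end
end

section
/- Let p be a prime and a, b, u, t integers with gcd(ab, p) = 1. Then Ŝ(a, u, t, b, p, p) = 1 if p ∤ t and p ∤ u; Ŝ(a, u, t, b, p, p) = p if p | t and p | u; and Ŝ(a, u, t, b, p, p) = 0 otherwise. -/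
open scoped BigOperators

lemma eC_int (k : ℤ) : eC k = 1 := by
  rw [eC, show ((2 : ℂ) * Real.pi * Complex.I * ((k : ℤ) : ℝ)) = (k : ℤ) * (2 * Real.pi * Complex.I) by push_cast; ring]
  exact Complex.exp_int_mul_two_pi_mul_I k

/-- `epd p m = e(m/p)`. -/
noncomputable def epd (p : ℕ) (m : ℤ) : ℂ := eC ((m : ℝ) / (p : ℝ))

lemma epd_add (p : ℕ) (m n : ℤ) : epd p (m + n) = epd p m * epd p n := by
  rw [epd, epd, epd, ← eC_add, ← add_div]; push_cast; ring_nf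

lemma epd_of_dvd (p : ℕ) (hp : 0 < p) (m : ℤ) (h : (p : ℤ) ∣ m) : epd p m = 1 := by
  obtain ⟨k, rfl⟩ := h
  rw [epd]
  have : ((p * k : ℤ) : ℝ) / (p : ℝ) = (k : ℤ) := by
    push_cast
    field_simp
  rw [this, eC_int]

lemma epd_pow (p : ℕ) (m : ℤ) (x : ℕ) : epd p (x * m) = (epd p m) ^ x := by
  induction x with
  | zero => simp [epd, eC]
  | succ n ih => rw [show ((n+1 : ℕ) : ℤ) * m = n * m + m by push_cast; ring, epd_add, ih, pow_succ]

lemma epd_eq_one_iff (p : ℕ) (hp : 0 < p) (m : ℤ) : epd p m = 1 ↔ (p : ℤ) ∣ m := by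
  constructor
  · intro h
    rw [epd, eC, Complex.exp_eq_one_iff] at h
    obtain ⟨n, hn⟩ := h
    have hpi : (Real.pi : ℂ) ≠ 0 := by exact_mod_cast Real.pi_ne_zero
    have h2 : (2 : ℂ) ≠ 0 := two_ne_zero
    have hI : Complex.I ≠ 0 := Complex.I_ne_zero
    have hkey : (((m : ℝ) / (p : ℝ) : ℝ) : ℂ) = (n : ℂ) := by
      have hne : (2 : ℂ) * Real.pi * Complex.I ≠ 0 := mul_ne_zero (mul_ne_zero h2 hpi) hI
      field_simp at hn
      have hn' : ((((m : ℝ) / (p : ℝ) : ℝ) : ℂ)) * ((2 : ℂ) * Real.pi * Complex.I)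
          = (n : ℂ) * ((2 : ℂ) * Real.pi * Complex.I) := by
        rw [← hn]
      exact mul_right_cancel₀ hne hn'
    have hre : (m : ℝ) / (p : ℝ) = (n : ℝ) := by
      exact_mod_cast hkey
    have hp' : (p : ℝ) ≠ 0 := by positivity
    have : (m : ℝ) = (n : ℝ) * (p : ℝ) := by
      field_simp at hre; linarith [hre]
    have hm : m = n * p := by exact_mod_cast this
    exact ⟨n, by rw [hm]; ring⟩
  · exact epd_of_dvd p hp m

lemma geo (p : ℕ) (hp : 0 < p) (c : ℤ) :
    ∑ x ∈ Finset.range p, epd p (x * c) = if (p : ℤ) ∣ c then (p : ℂ) else 0 := by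
  split_ifs with h
  · have : ∀ x ∈ Finset.range p, epd p (x * c) = 1 := fun x _ =>
      epd_of_dvd p hp _ (Dvd.dvd.mul_left h x)
    rw [Finset.sum_congr rfl this]; simp
  · have hz : epd p c ≠ 1 := fun hc => h ((epd_eq_one_iff p hp c).1 hc)
    have hgeo : ∑ x ∈ Finset.range p, (epd p c) ^ x = ((epd p c) ^ p - 1) / (epd p c - 1) :=
      geom_sum_eq hz p
    have hcyc : (epd p c) ^ p = 1 := by
      rw [← epd_pow, epd_of_dvd p hp _ ⟨c, rfl⟩]
    calc ∑ x ∈ Finset.range p, epd p (x * c) = ∑ x ∈ Finset.range p, (epd p c) ^ x := by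
          exact Finset.sum_congr rfl fun x _ => epd_pow p c x
      _ = 0 := by rw [hgeo, hcyc, sub_self, zero_div]

lemma epd_congr (p : ℕ) (hp : 0 < p) (m n : ℤ) (h : (p : ℤ) ∣ m - n) : epd p m = epd p n := by
  have : m = n + (m - n) := by ring
  rw [this, epd_add, epd_of_dvd p hp _ h, mul_one]

lemma pin (p : ℕ) [NeZero p] (w : ZMod p) (f : ℕ → ℂ)
    (h0 : ∀ z, z < p → (z : ZMod p) ≠ w → f z = 0) :
    ∑ z ∈ Finset.range p, f z = f w.val := by
  refine Finset.sum_eq_single_of_mem w.val (Finset.mem_range.2 w.val_lt) fun z hz hne => ?_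
  refine h0 z (Finset.mem_range.1 hz) fun hzw => hne ?_
  have := congrArg ZMod.val hzw
  rwa [ZMod.val_natCast, Nat.mod_eq_of_lt (Finset.mem_range.1 hz)] at this

lemma pin0 (p : ℕ) [NeZero p] (f : ℕ → ℂ)
    (h0 : ∀ z, z < p → (z : ZMod p) ≠ 0 → f z = 0) :
    ∑ z ∈ Finset.range p, f z = f 0 := by
  rw [pin p 0 f h0, ZMod.val_zero]

lemma free_sum (p : ℕ) (f : ℕ → ℂ) (c : ℂ) (h : ∀ z, z < p → f z = c) :
    ∑ z ∈ Finset.range p, f z = (p : ℂ) * c := by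
  rw [Finset.sum_congr rfl (fun z hz => h z (Finset.mem_range.1 hz)), Finset.sum_const,
    Finset.card_range, nsmul_eq_mul]

lemma gcd3 (p : ℕ) (hp : p.Prime) (B C : ℕ) :
    Nat.gcd B (Nat.gcd C p) = 1 ↔ ¬ ((B : ZMod p) = 0 ∧ (C : ZMod p) = 0) := by
  haveI := Fact.mk hp
  haveI : NeZero p := ⟨hp.pos.ne'⟩
  simp only [ZMod.natCast_eq_zero_iff]
  constructor
  · rintro h ⟨hB, hC⟩
    have hd : p ∣ Nat.gcd B (Nat.gcd C p) := Nat.dvd_gcd hB (Nat.dvd_gcd hC dvd_rfl)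
    rw [h] at hd
    exact absurd (Nat.eq_one_of_dvd_one hd) hp.one_lt.ne'
  · intro h
    rcases hp.eq_one_or_self_of_dvd (Nat.gcd C p) (Nat.gcd_dvd_right _ _) with h1 | h1
    · rw [h1, Nat.gcd_one_right]
    · rw [h1]
      have hC : p ∣ C := h1 ▸ Nat.gcd_dvd_left C p
      have hB : ¬ p ∣ B := fun hB => h ⟨hB, hC⟩
      exact (Nat.Prime.coprime_iff_not_dvd hp).2 hB |>.symm

-- swap lemmas
lemma swap1 (s t1 : Finset ℕ) (f : ℕ → ℕ → ℂ) :
    ∑ z ∈ s, ∑ a1 ∈ t1, f z a1 = ∑ a1 ∈ t1, ∑ z ∈ s, f z a1 := Finset.sum_comm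

lemma swap2 (s t1 t2 : Finset ℕ) (f : ℕ → ℕ → ℕ → ℂ) :
    ∑ z ∈ s, ∑ a1 ∈ t1, ∑ a2 ∈ t2, f z a1 a2
      = ∑ a1 ∈ t1, ∑ a2 ∈ t2, ∑ z ∈ s, f z a1 a2 :=
  Finset.sum_comm.trans (Finset.sum_congr rfl fun a1 _ => swap1 s t2 (fun z a2 => f z a1 a2))


lemma swap3 (s t1 t2 t3 : Finset ℕ) (f : ℕ → ℕ → ℕ → ℕ → ℂ) :
    (∑ z ∈ s, ∑ a1 ∈ t1, ∑ a2 ∈ t2, ∑ a3 ∈ t3, f z a1 a2 a3) = ∑ a1 ∈ t1, ∑ a2 ∈ t2, ∑ a3 ∈ t3, ∑ z ∈ s, f z a1 a2 a3 :=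
  Finset.sum_comm.trans (Finset.sum_congr rfl fun a1 _ =>
    swap2 s t2 t3 (fun z a2 a3 => f z a1 a2 a3))


lemma swap4 (s t1 t2 t3 t4 : Finset ℕ) (f : ℕ → ℕ → ℕ → ℕ → ℕ → ℂ) :
    (∑ z ∈ s, ∑ a1 ∈ t1, ∑ a2 ∈ t2, ∑ a3 ∈ t3, ∑ a4 ∈ t4, f z a1 a2 a3 a4) = ∑ a1 ∈ t1, ∑ a2 ∈ t2, ∑ a3 ∈ t3, ∑ a4 ∈ t4, ∑ z ∈ s, f z a1 a2 a3 a4 :=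
  Finset.sum_comm.trans (Finset.sum_congr rfl fun a1 _ =>
    swap3 s t2 t3 t4 (fun z a2 a3 a4 => f z a1 a2 a3 a4))


lemma swap5 (s t1 t2 t3 t4 t5 : Finset ℕ) (f : ℕ → ℕ → ℕ → ℕ → ℕ → ℕ → ℂ) :
    (∑ z ∈ s, ∑ a1 ∈ t1, ∑ a2 ∈ t2, ∑ a3 ∈ t3, ∑ a4 ∈ t4, ∑ a5 ∈ t5, f z a1 a2 a3 a4 a5) = ∑ a1 ∈ t1, ∑ a2 ∈ t2, ∑ a3 ∈ t3, ∑ a4 ∈ t4, ∑ a5 ∈ t5, ∑ z ∈ s, f z a1 a2 a3 a4 a5 :=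
  Finset.sum_comm.trans (Finset.sum_congr rfl fun a1 _ =>
    swap4 s t2 t3 t4 t5 (fun z a2 a3 a4 a5 => f z a1 a2 a3 a4 a5))


lemma swap6 (s t1 t2 t3 t4 t5 t6 : Finset ℕ) (f : ℕ → ℕ → ℕ → ℕ → ℕ → ℕ → ℕ → ℂ) :
    (∑ z ∈ s, ∑ a1 ∈ t1, ∑ a2 ∈ t2, ∑ a3 ∈ t3, ∑ a4 ∈ t4, ∑ a5 ∈ t5, ∑ a6 ∈ t6, f z a1 a2 a3 a4 a5 a6) = ∑ a1 ∈ t1, ∑ a2 ∈ t2, ∑ a3 ∈ t3, ∑ a4 ∈ t4, ∑ a5 ∈ t5, ∑ a6 ∈ t6, ∑ z ∈ s, f z a1 a2 a3 a4 a5 a6 :=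
  Finset.sum_comm.trans (Finset.sum_congr rfl fun a1 _ =>
    swap5 s t2 t3 t4 t5 t6 (fun z a2 a3 a4 a5 a6 => f z a1 a2 a3 a4 a5 a6))


lemma swap7 (s t1 t2 t3 t4 t5 t6 t7 : Finset ℕ) (f : ℕ → ℕ → ℕ → ℕ → ℕ → ℕ → ℕ → ℕ → ℂ) :
    (∑ z ∈ s, ∑ a1 ∈ t1, ∑ a2 ∈ t2, ∑ a3 ∈ t3, ∑ a4 ∈ t4, ∑ a5 ∈ t5, ∑ a6 ∈ t6, ∑ a7 ∈ t7, f z a1 a2 a3 a4 a5 a6 a7) = ∑ a1 ∈ t1, ∑ a2 ∈ t2, ∑ a3 ∈ t3, ∑ a4 ∈ t4, ∑ a5 ∈ t5, ∑ a6 ∈ t6, ∑ a7 ∈ t7, ∑ z ∈ s, f z a1 a2 a3 a4 a5 a6 a7 :=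
  Finset.sum_comm.trans (Finset.sum_congr rfl fun a1 _ =>
    swap6 s t2 t3 t4 t5 t6 t7 (fun z a2 a3 a4 a5 a6 a7 => f z a1 a2 a3 a4 a5 a6 a7))


lemma swap8 (s t1 t2 t3 t4 t5 t6 t7 t8 : Finset ℕ) (f : ℕ → ℕ → ℕ → ℕ → ℕ → ℕ → ℕ → ℕ → ℕ → ℂ) :
    (∑ z ∈ s, ∑ a1 ∈ t1, ∑ a2 ∈ t2, ∑ a3 ∈ t3, ∑ a4 ∈ t4, ∑ a5 ∈ t5, ∑ a6 ∈ t6, ∑ a7 ∈ t7, ∑ a8 ∈ t8, f z a1 a2 a3 a4 a5 a6 a7 a8) = ∑ a1 ∈ t1, ∑ a2 ∈ t2, ∑ a3 ∈ t3, ∑ a4 ∈ t4, ∑ a5 ∈ t5, ∑ a6 ∈ t6, ∑ a7 ∈ t7, ∑ a8 ∈ t8, ∑ z ∈ s, f z a1 a2 a3 a4 a5 a6 a7 a8 :=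
  Finset.sum_comm.trans (Finset.sum_congr rfl fun a1 _ =>
    swap7 s t2 t3 t4 t5 t6 t7 t8 (fun z a2 a3 a4 a5 a6 a7 a8 => f z a1 a2 a3 a4 a5 a6 a7 a8))


lemma prodsum (s t : Finset ℕ) (K : ℂ) (f g : ℕ → ℂ) :
    ∑ x ∈ s, ∑ y ∈ t, K * f x * g y = K * ((∑ x ∈ s, f x) * (∑ y ∈ t, g y)) := by
  rw [Finset.sum_mul_sum, Finset.mul_sum]
  refine Finset.sum_congr rfl fun x _ => ?_
  rw [Finset.mul_sum]
  exact Finset.sum_congr rfl fun y _ => by ring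

lemma mul_ite0 (e : ℂ) (P : Prop) [Decidable P] (v : ℂ) :
    (if P then e * v else 0) = e * (if P then v else 0) := by split <;> simp

lemma inner_eval (p : ℕ) (hp : 0 < p) (a b u t : ℤ) (B1 B2 Y1 Z1 Y2 Z2 : ℕ)
    (C : Prop) [Decidable C] :
    ∑ x ∈ Finset.range p, ∑ y ∈ Finset.range p,
      (if C then
          epd p (a * (B1 : ℤ) + (x : ℤ) * ((Y1 : ℤ) * (p : ℤ) - (Z1 : ℤ) * (B2 : ℤ))) *
            epd p ((y : ℤ) * (B2 : ℤ) + b * ((Y2 : ℤ) * (p : ℤ) - (Z2 : ℤ) * (B1 : ℤ)))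
        else 0) * epd p (-((x : ℤ) * t)) * epd p (-((y : ℤ) * u))
    = if C ∧ (p : ℤ) ∣ ((Y1 : ℤ) * (p : ℤ) - (Z1 : ℤ) * (B2 : ℤ) - t) ∧ (p : ℤ) ∣ ((B2 : ℤ) - u) then
        (p : ℂ) * (p : ℂ) * epd p (a * (B1 : ℤ) + b * ((Y2 : ℤ) * (p : ℤ) - (Z2 : ℤ) * (B1 : ℤ)))
      else 0 := by
  by_cases hC : C
  · simp only [hC, if_true, true_and]
    have key : ∀ x y : ℕ,
        epd p (a * (B1 : ℤ) + (x : ℤ) * ((Y1 : ℤ) * (p : ℤ) - (Z1 : ℤ) * (B2 : ℤ))) *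
            epd p ((y : ℤ) * (B2 : ℤ) + b * ((Y2 : ℤ) * (p : ℤ) - (Z2 : ℤ) * (B1 : ℤ))) *
            epd p (-((x : ℤ) * t)) * epd p (-((y : ℤ) * u))
        = epd p (a * (B1 : ℤ) + b * ((Y2 : ℤ) * (p : ℤ) - (Z2 : ℤ) * (B1 : ℤ))) *
            epd p ((x : ℤ) * ((Y1 : ℤ) * (p : ℤ) - (Z1 : ℤ) * (B2 : ℤ) - t)) *
            epd p ((y : ℤ) * ((B2 : ℤ) - u)) := by
      intro x y
      simp only [← epd_add]
      congr 1
      ring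
    simp only [key]
    rw [prodsum, geo p hp, geo p hp]
    by_cases h1 : (p : ℤ) ∣ ((Y1 : ℤ) * (p : ℤ) - (Z1 : ℤ) * (B2 : ℤ) - t) <;>
      by_cases h2 : (p : ℤ) ∣ ((B2 : ℤ) - u) <;> simp [h1, h2] <;> ring
  · simp [hC]

lemma pull_c (s t : Finset ℕ) (c : ℂ) (F : ℕ → ℕ → ℂ) (g1 g2 : ℕ → ℂ) :
    ∑ x ∈ s, ∑ y ∈ t, (c * F x y) * g1 x * g2 y = c * ∑ x ∈ s, ∑ y ∈ t, F x y * g1 x * g2 y := by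
  rw [Finset.mul_sum]
  refine Finset.sum_congr rfl fun x _ => ?_
  rw [Finset.mul_sum]
  exact Finset.sum_congr rfl fun y _ => by ring

lemma Shat_eq (p : ℕ) (hp : 0 < p) (a b u t : ℤ) :
    Shat a u t b p p = ((p : ℂ) * (p : ℂ))⁻¹ * (∑ B1 ∈ Finset.range p, ∑ C1 ∈ Finset.range p, ∑ B2 ∈ Finset.range p, ∑ C2 ∈ Finset.range p, ∑ Y1 ∈ Finset.range p, ∑ Z1 ∈ Finset.range p, ∑ Y2 ∈ Finset.range p, ∑ Z2 ∈ Finset.range p, if (Nat.gcd B1 (Nat.gcd C1 p) = 1 ∧ Nat.gcd B2 (Nat.gcd C2 p) = 1 ∧ ((p : ℤ) * (p : ℤ)) ∣ ((p : ℤ) * (C2 : ℤ) + (B1 : ℤ) * (B2 : ℤ) + (C1 : ℤ) * (p : ℤ)) ∧ (p : ℤ) ∣ ((Y1 : ℤ) * (B1 : ℤ) + (Z1 : ℤ) * (C1 : ℤ) - 1) ∧ (p : ℤ) ∣ ((Y2 : ℤ) * (B2 : ℤ) + (Z2 : ℤ) * (C2 : ℤ) - 1)) ∧ (p : ℤ)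 ∣ ((Y1 : ℤ) * (p : ℤ) - (Z1 : ℤ) * (B2 : ℤ) - t) ∧ (p : ℤ) ∣ ((B2 : ℤ) - u) then epd p (a * (B1 : ℤ) + b * ((Y2 : ℤ) * (p : ℤ) - (Z2 : ℤ) * (B1 : ℤ))) else 0) := by
  have h2 : (∑ x ∈ Finset.range p, ∑ y ∈ Finset.range p, (∑ B1 ∈ Finset.range p, ∑ C1 ∈ Finset.range p, ∑ B2 ∈ Finset.range p, ∑ C2 ∈ Finset.range p, ∑ Y1 ∈ Finset.range p, ∑ Z1 ∈ Finset.range p, ∑ Y2 ∈ Finset.range p, ∑ Z2 ∈ Finset.range p, (if Nat.gcd B1 (Nat.gcd C1 p) = 1 ∧ Nat.gcd B2 (Nat.gcd C2 p) = 1 ∧ ((p : ℤ) * (p : ℤ)) ∣ ((p : ℤ) * (C2 : ℤ) + (B1 : ℤ) * (B2 : ℤ) + (C1 : ℤ) * (p : ℤ)) ∧ (p : ℤ) ∣ ((Y1 : ℤ) * (B1 : ℤ) + (Z1 : ℤ) * (C1 : ℤ) - 1) ∧ (p : ℤ) ∣ ((Y2 : ℤ) * (B2 : ℤ) + (Z2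 : ℤ) * (C2 : ℤ) - 1) then epd p (a * (B1 : ℤ) + (x : ℤ) * ((Y1 : ℤ) * (p : ℤ) - (Z1 : ℤ) * (B2 : ℤ))) * epd p ((y : ℤ) * (B2 : ℤ) + b * ((Y2 : ℤ) * (p : ℤ) - (Z2 : ℤ) * (B1 : ℤ))) else 0)) * epd p (-((x : ℤ) * t)) * epd p (-((y : ℤ) * u))) = ∑ x ∈ Finset.range p, ∑ y ∈ Finset.range p, ∑ B1 ∈ Finset.range p, ∑ C1 ∈ Finset.range p, ∑ B2 ∈ Finset.range p, ∑ C2 ∈ Finset.range p, ∑ Y1 ∈ Finset.range p, ∑ Z1 ∈ Finset.range p, ∑ Y2 ∈ Finset.range p, ∑ Z2 ∈ Finset.range p, (if Nat.gcd B1 (Nat.gcd C1 p) = 1 ∧ Nat.gcd B2 (Nat.gcd C2 p) = 1 ∧ ((p : ℤ) * (p : ℤ)) ∣ ((p : ℤ) * (C2 : ℤ) + (B1 : ℤ) * (B2 : ℤ) + (C1 : ℤ) * (p : ℤ)) ∧ (p : ℤ) ∣ ((Y1 : ℤ) * (B1 : ℤ) + (Z1 : ℤ) * (C1 : ℤ)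 - 1) ∧ (p : ℤ) ∣ ((Y2 : ℤ) * (B2 : ℤ) + (Z2 : ℤ) * (C2 : ℤ) - 1) then epd p (a * (B1 : ℤ) + (x : ℤ) * ((Y1 : ℤ) * (p : ℤ) - (Z1 : ℤ) * (B2 : ℤ))) * epd p ((y : ℤ) * (B2 : ℤ) + b * ((Y2 : ℤ) * (p : ℤ) - (Z2 : ℤ) * (B1 : ℤ))) else 0) * epd p (-((x : ℤ) * t)) * epd p (-((y : ℤ) * u)) := by
    simp (config := { maxSteps := 10000000 }) only [Finset.sum_mul]
  have h3 : (∑ x ∈ Finset.range p, ∑ y ∈ Finset.range p, ∑ B1 ∈ Finset.range p, ∑ C1 ∈ Finset.range p, ∑ B2 ∈ Finset.range p, ∑ C2 ∈ Finset.range p, ∑ Y1 ∈ Finset.range p, ∑ Z1 ∈ Finset.range p, ∑ Y2 ∈ Finset.range p, ∑ Z2 ∈ Finset.range p, (if Nat.gcd B1 (Nat.gcd C1 p) = 1 ∧ Nat.gcd B2 (Nat.gcd C2 p) = 1 ∧ ((p : ℤ) * (p : ℤ)) ∣ ((p : ℤ) * (C2 : ℤ) + (B1 : ℤ) * (B2 :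 ℤ) + (C1 : ℤ) * (p : ℤ)) ∧ (p : ℤ) ∣ ((Y1 : ℤ) * (B1 : ℤ) + (Z1 : ℤ) * (C1 : ℤ) - 1) ∧ (p : ℤ) ∣ ((Y2 : ℤ) * (B2 : ℤ) + (Z2 : ℤ) * (C2 : ℤ) - 1) then epd p (a * (B1 : ℤ) + (x : ℤ) * ((Y1 : ℤ) * (p : ℤ) - (Z1 : ℤ) * (B2 : ℤ))) * epd p ((y : ℤ) * (B2 : ℤ) + b * ((Y2 : ℤ) * (p : ℤ) - (Z2 : ℤ) * (B1 : ℤ))) else 0) * epd p (-((x : ℤ) * t)) * epd p (-((y : ℤ) * u))) = ∑ x ∈ Finset.range p, ∑ B1 ∈ Finset.range p, ∑ C1 ∈ Finset.range p, ∑ B2 ∈ Finset.range p, ∑ C2 ∈ Finset.range p, ∑ Y1 ∈ Finset.range p, ∑ Z1 ∈ Finset.range p, ∑ Y2 ∈ Finset.range p, ∑ Z2 ∈ Finset.range p, ∑ y ∈ Finset.range p, (if Nat.gcd B1 (Nat.gcd C1 p) = 1 ∧ Nat.gcd B2 (Nat.gcd C2 p) = 1 ∧ ((p : ℤ) * (p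 : ℤ)) ∣ ((p : ℤ) * (C2 : ℤ) + (B1 : ℤ) * (B2 : ℤ) + (C1 : ℤ) * (p : ℤ)) ∧ (p : ℤ) ∣ ((Y1 : ℤ) * (B1 : ℤ) + (Z1 : ℤ) * (C1 : ℤ) - 1) ∧ (p : ℤ) ∣ ((Y2 : ℤ) * (B2 : ℤ) + (Z2 : ℤ) * (C2 : ℤ) - 1) then epd p (a * (B1 : ℤ) + (x : ℤ) * ((Y1 : ℤ) * (p : ℤ) - (Z1 : ℤ) * (B2 : ℤ))) * epd p ((y : ℤ) * (B2 : ℤ) + b * ((Y2 : ℤ) * (p : ℤ) - (Z2 : ℤ) * (B1 : ℤ))) else 0) * epd p (-((x : ℤ) * t)) * epd p (-((y : ℤ) * u)) :=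
    Finset.sum_congr rfl fun x _ => swap8 _ _ _ _ _ _ _ _ _
      (fun y B1 C1 B2 C2 Y1 Z1 Y2 Z2 => (if Nat.gcd B1 (Nat.gcd C1 p) = 1 ∧ Nat.gcd B2 (Nat.gcd C2 p) = 1 ∧ ((p : ℤ) * (p : ℤ)) ∣ ((p : ℤ) * (C2 : ℤ) + (B1 : ℤ) * (B2 : ℤ) + (C1 : ℤ) * (p : ℤ)) ∧ (p : ℤ) ∣ ((Y1 : ℤ) * (B1 : ℤ) + (Z1 : ℤ) * (C1 : ℤ) - 1) ∧ (p : ℤ) ∣ ((Y2 : ℤ) * (B2 : ℤ) + (Z2 : ℤ) * (C2 : ℤ) - 1) then epd p (a * (B1 : ℤ) + (x : ℤ) * ((Y1 : ℤ) * (p : ℤ) - (Z1 : ℤ) * (B2 : ℤ))) * epd p ((y : ℤ) * (B2 : ℤ) + b * ((Y2 : ℤ) * (p : ℤ) - (Z2 : ℤ) * (B1 : ℤ))) else 0) * epd p (-((x : ℤ) * t)) * epd p (-((y : ℤ) * u)))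
  have h4 : (∑ x ∈ Finset.range p, ∑ B1 ∈ Finset.range p, ∑ C1 ∈ Finset.range p, ∑ B2 ∈ Finset.range p, ∑ C2 ∈ Finset.range p, ∑ Y1 ∈ Finset.range p, ∑ Z1 ∈ Finset.range p, ∑ Y2 ∈ Finset.range p, ∑ Z2 ∈ Finset.range p, ∑ y ∈ Finset.range p, (if Nat.gcd B1 (Nat.gcd C1 p) = 1 ∧ Nat.gcd B2 (Nat.gcd C2 p) = 1 ∧ ((p : ℤ) * (p : ℤ)) ∣ ((p : ℤ) * (C2 : ℤ) + (B1 : ℤ) * (B2 : ℤ) + (C1 : ℤ) * (p : ℤ)) ∧ (p : ℤ) ∣ ((Y1 : ℤ) * (B1 : ℤ) + (Z1 : ℤ) * (C1 : ℤ) - 1) ∧ (p : ℤ) ∣ ((Y2 : ℤ) * (B2 : ℤ) + (Z2 : ℤ) * (C2 : ℤ) - 1) then epd p (a * (B1 : ℤ) + (x : ℤ) * ((Y1 : ℤ) * (p : ℤ) - (Z1 : ℤ) * (B2 : ℤ))) * epd p ((y : ℤ) * (B2 : ℤ) + b * ((Y2 : ℤ) * (p : ℤ) - (Z2 : ℤ)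 * (B1 : ℤ))) else 0) * epd p (-((x : ℤ) * t)) * epd p (-((y : ℤ) * u))) = ∑ B1 ∈ Finset.range p, ∑ C1 ∈ Finset.range p, ∑ B2 ∈ Finset.range p, ∑ C2 ∈ Finset.range p, ∑ Y1 ∈ Finset.range p, ∑ Z1 ∈ Finset.range p, ∑ Y2 ∈ Finset.range p, ∑ Z2 ∈ Finset.range p, ∑ x ∈ Finset.range p, ∑ y ∈ Finset.range p, (if Nat.gcd B1 (Nat.gcd C1 p) = 1 ∧ Nat.gcd B2 (Nat.gcd C2 p) = 1 ∧ ((p : ℤ) * (p : ℤ)) ∣ ((p : ℤ) * (C2 : ℤ) + (B1 : ℤ) * (B2 : ℤ) + (C1 : ℤ) * (p : ℤ)) ∧ (p : ℤ) ∣ ((Y1 : ℤ) * (B1 : ℤ) + (Z1 : ℤ) * (C1 : ℤ) - 1) ∧ (p : ℤ) ∣ ((Y2 : ℤ) * (B2 : ℤ) + (Z2 : ℤ) * (C2 : ℤ) - 1) then epd p (a * (B1 : ℤ) + (x : ℤ) * ((Y1 : ℤ) * (p : ℤ) - (Z1 : ℤ) * (B2 : ℤ))) * epd p ((y : ℤ)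 * (B2 : ℤ) + b * ((Y2 : ℤ) * (p : ℤ) - (Z2 : ℤ) * (B1 : ℤ))) else 0) * epd p (-((x : ℤ) * t)) * epd p (-((y : ℤ) * u)) :=
    swap8 _ _ _ _ _ _ _ _ _
      (fun x B1 C1 B2 C2 Y1 Z1 Y2 Z2 => ∑ y ∈ Finset.range p, (if Nat.gcd B1 (Nat.gcd C1 p) = 1 ∧ Nat.gcd B2 (Nat.gcd C2 p) = 1 ∧ ((p : ℤ) * (p : ℤ)) ∣ ((p : ℤ) * (C2 : ℤ) + (B1 : ℤ) * (B2 : ℤ) + (C1 : ℤ) * (p : ℤ)) ∧ (p : ℤ) ∣ ((Y1 : ℤ) * (B1 : ℤ) + (Z1 : ℤ) * (C1 : ℤ) - 1) ∧ (p : ℤ) ∣ ((Y2 : ℤ) * (B2 : ℤ) + (Z2 : ℤ) * (C2 : ℤ) - 1) then epd p (a * (B1 : ℤ) + (x : ℤ) * ((Y1 : ℤ) * (p : ℤ) - (Z1 : ℤ) * (B2 : ℤ))) * epd p ((y : ℤ) * (B2 : ℤ) + b * ((Y2 : ℤ) * (p : ℤ) - (Z2 : ℤ) * (B1 : ℤ)))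 else 0) * epd p (-((x : ℤ) * t)) * epd p (-((y : ℤ) * u)))
  have h5 : (∑ B1 ∈ Finset.range p, ∑ C1 ∈ Finset.range p, ∑ B2 ∈ Finset.range p, ∑ C2 ∈ Finset.range p, ∑ Y1 ∈ Finset.range p, ∑ Z1 ∈ Finset.range p, ∑ Y2 ∈ Finset.range p, ∑ Z2 ∈ Finset.range p, ∑ x ∈ Finset.range p, ∑ y ∈ Finset.range p, (if Nat.gcd B1 (Nat.gcd C1 p) = 1 ∧ Nat.gcd B2 (Nat.gcd C2 p) = 1 ∧ ((p : ℤ) * (p : ℤ)) ∣ ((p : ℤ) * (C2 : ℤ) + (B1 : ℤ) * (B2 : ℤ) + (C1 : ℤ) * (p : ℤ)) ∧ (p : ℤ) ∣ ((Y1 : ℤ) * (B1 : ℤ) + (Z1 : ℤ) * (C1 : ℤ) - 1) ∧ (p : ℤ) ∣ ((Y2 : ℤ) * (B2 : ℤ) + (Z2 : ℤ) * (C2 : ℤ) - 1) then epd p (a * (B1 : ℤ) + (x : ℤ) * ((Y1 : ℤ) * (p : ℤ) - (Z1 : ℤ) * (B2 : ℤ))) * epd p ((y : ℤ) * (B2 :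 ℤ) + b * ((Y2 : ℤ) * (p : ℤ) - (Z2 : ℤ) * (B1 : ℤ))) else 0) * epd p (-((x : ℤ) * t)) * epd p (-((y : ℤ) * u))) = ∑ B1 ∈ Finset.range p, ∑ C1 ∈ Finset.range p, ∑ B2 ∈ Finset.range p, ∑ C2 ∈ Finset.range p, ∑ Y1 ∈ Finset.range p, ∑ Z1 ∈ Finset.range p, ∑ Y2 ∈ Finset.range p, ∑ Z2 ∈ Finset.range p, if (Nat.gcd B1 (Nat.gcd C1 p) = 1 ∧ Nat.gcd B2 (Nat.gcd C2 p) = 1 ∧ ((p : ℤ) * (p : ℤ)) ∣ ((p : ℤ) * (C2 : ℤ) + (B1 : ℤ) * (B2 : ℤ) + (C1 : ℤ) * (p : ℤ)) ∧ (p : ℤ) ∣ ((Y1 : ℤ) * (B1 : ℤ) + (Z1 : ℤ) * (C1 : ℤ) - 1) ∧ (p : ℤ) ∣ ((Y2 : ℤ) * (B2 : ℤ) + (Z2 : ℤ) * (C2 : ℤ) - 1)) ∧ (p : ℤ) ∣ ((Y1 : ℤ) * (p : ℤ) - (Z1 : ℤ) * (B2 : ℤ) - t) ∧ (p : ℤ)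 ∣ ((B2 : ℤ) - u) then (p : ℂ) * (p : ℂ) * epd p (a * (B1 : ℤ) + b * ((Y2 : ℤ) * (p : ℤ) - (Z2 : ℤ) * (B1 : ℤ))) else 0 :=
    Finset.sum_congr rfl fun B1 _ => Finset.sum_congr rfl fun C1 _ => Finset.sum_congr rfl fun B2 _ => Finset.sum_congr rfl fun C2 _ => Finset.sum_congr rfl fun Y1 _ => Finset.sum_congr rfl fun Z1 _ => Finset.sum_congr rfl fun Y2 _ => Finset.sum_congr rfl fun Z2 _ => inner_eval p hp a b u t B1 B2 Y1 Z1 Y2 Z2 _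
  have hpp : (p : ℂ) * (p : ℂ) ≠ 0 :=
    mul_ne_zero (Nat.cast_ne_zero.2 hp.ne') (Nat.cast_ne_zero.2 hp.ne')
  rw [show Shat a u t b p p = ((p : ℂ) * (p : ℂ))⁻¹ * ∑ x ∈ Finset.range p, ∑ y ∈ Finset.range p, (((p : ℂ) * (p : ℂ))⁻¹ * (∑ B1 ∈ Finset.range p, ∑ C1 ∈ Finset.range p, ∑ B2 ∈ Finset.range p, ∑ C2 ∈ Finset.range p, ∑ Y1 ∈ Finset.range p, ∑ Z1 ∈ Finset.range p, ∑ Y2 ∈ Finset.range p, ∑ Z2 ∈ Finset.range p, (if Nat.gcd B1 (Nat.gcd C1 p) = 1 ∧ Nat.gcd B2 (Nat.gcd C2 p) = 1 ∧ ((p : ℤ) * (p : ℤ)) ∣ ((p : ℤ) * (C2 : ℤ) + (B1 : ℤ) * (B2 : ℤ) + (C1 : ℤ) * (p : ℤ)) ∧ (p : ℤ) ∣ ((Y1 : ℤ) * (B1 : ℤ) + (Z1 : ℤ) * (C1 : ℤ) - 1) ∧ (p : ℤ) ∣ ((Y2 : ℤ) * (B2 : ℤ) + (Z2 : ℤ)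 * (C2 : ℤ) - 1) then epd p (a * (B1 : ℤ) + (x : ℤ) * ((Y1 : ℤ) * (p : ℤ) - (Z1 : ℤ) * (B2 : ℤ))) * epd p ((y : ℤ) * (B2 : ℤ) + b * ((Y2 : ℤ) * (p : ℤ) - (Z2 : ℤ) * (B1 : ℤ))) else 0))) * epd p (-((x : ℤ) * t)) * epd p (-((y : ℤ) * u)) from rfl, pull_c, h2, h3, h4, h5]
  simp only [mul_ite0, ← Finset.mul_sum]
  rw [inv_mul_cancel_left₀ hpp]

lemma h3_mid (p : ℕ) (B1 B2 C1 C2 : ℕ)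
    (h3 : ((p : ℤ) * (p : ℤ)) ∣ ((p : ℤ) * (C2 : ℤ) + (B1 : ℤ) * (B2 : ℤ) + (C1 : ℤ) * (p : ℤ))) :
    (p : ℤ) ∣ ((B1 : ℤ) * (B2 : ℤ)) := by
  have h0 := (dvd_mul_right (p : ℤ) (p : ℤ)).trans h3
  have h1 : (B1 : ℤ) * (B2 : ℤ)
      = ((p : ℤ) * (C2 : ℤ) + (B1 : ℤ) * (B2 : ℤ) + (C1 : ℤ) * (p : ℤ)) - (p : ℤ) * (C2 : ℤ)
        - (C1 : ℤ) * (p : ℤ) := by ring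
  rw [h1]
  exact (h0.sub (dvd_mul_right _ _)).sub (dvd_mul_left _ _)

lemma h3_c2c1 (p : ℕ) (hp : 0 < p) (B1 B2 C1 C2 : ℕ) (h0 : (B1 : ℤ) * (B2 : ℤ) = 0)
    (h3 : ((p : ℤ) * (p : ℤ)) ∣ ((p : ℤ) * (C2 : ℤ) + (B1 : ℤ) * (B2 : ℤ) + (C1 : ℤ) * (p : ℤ))) :
    (p : ℤ) ∣ ((C2 : ℤ) + (C1 : ℤ)) := by
  have h1 : (p : ℤ) * (C2 : ℤ) + (B1 : ℤ) * (B2 : ℤ) + (C1 : ℤ) * (p : ℤ)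
      = (p : ℤ) * ((C2 : ℤ) + (C1 : ℤ)) := by linear_combination h0
  rw [h1] at h3
  exact (mul_dvd_mul_iff_left (show (p : ℤ) ≠ 0 from Int.natCast_ne_zero.2 hp.ne')).1 h3

lemma c2c1_h3 (p : ℕ) (B1 B2 C1 C2 : ℕ) (h0 : (B1 : ℤ) * (B2 : ℤ) = 0)
    (h : (p : ℤ) ∣ ((C2 : ℤ) + (C1 : ℤ))) :
    ((p : ℤ) * (p : ℤ)) ∣ ((p : ℤ) * (C2 : ℤ) + (B1 : ℤ) * (B2 : ℤ) + (C1 : ℤ) * (p : ℤ)) := by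
  obtain ⟨k, hk⟩ := h
  exact ⟨k, by linear_combination (p : ℤ) * hk + h0⟩

lemma dvd_to_K (p : ℕ) [NeZero p] {m : ℤ} (h : (p : ℤ) ∣ m) : (m : ZMod p) = 0 :=
  (ZMod.intCast_zmod_eq_zero_iff_dvd m p).2 h
lemma K_to_dvd (p : ℕ) [NeZero p] {m : ℤ} (h : (m : ZMod p) = 0) : (p : ℤ) ∣ m :=
  (ZMod.intCast_zmod_eq_zero_iff_dvd m p).1 h

lemma G_caseC (p : ℕ) (hp : p.Prime) (a b u t : ℤ) (ht : (p : ℤ) ∣ t) (hu : ¬ (p : ℤ) ∣ u) :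
    (∑ B1 ∈ Finset.range p, ∑ C1 ∈ Finset.range p, ∑ B2 ∈ Finset.range p, ∑ C2 ∈ Finset.range p, ∑ Y1 ∈ Finset.range p, ∑ Z1 ∈ Finset.range p, ∑ Y2 ∈ Finset.range p, ∑ Z2 ∈ Finset.range p, if (Nat.gcd B1 (Nat.gcd C1 p) = 1 ∧ Nat.gcd B2 (Nat.gcd C2 p) = 1 ∧ ((p : ℤ) * (p : ℤ)) ∣ ((p : ℤ) * (C2 : ℤ) + (B1 : ℤ) * (B2 : ℤ) + (C1 : ℤ) * (p : ℤ)) ∧ (p : ℤ) ∣ ((Y1 : ℤ) * (B1 : ℤ) + (Z1 : ℤ) * (C1 : ℤ) - 1) ∧ (p : ℤ) ∣ ((Y2 : ℤ) * (B2 : ℤ) + (Z2 : ℤ) * (C2 : ℤ) - 1)) ∧ (p : ℤ) ∣ ((Y1 : ℤ) * (p : ℤ) - (Z1 : ℤ) * (B2 : ℤ) - t) ∧ (p : ℤ) ∣ ((B2 : ℤ) - u) then epd p (a * (B1 : ℤ) + b * ((Y2 : ℤ) * (p : ℤ) - (Z2 : ℤ) * (B1 : ℤ))) else 0) = 0 :=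 by
  haveI := Fact.mk hp
  haveI : NeZero p := ⟨hp.pos.ne'⟩
  refine Finset.sum_eq_zero fun B1 _ => Finset.sum_eq_zero fun C1 _ => Finset.sum_eq_zero fun B2 _ => Finset.sum_eq_zero fun C2 _ => Finset.sum_eq_zero fun Y1 _ => Finset.sum_eq_zero fun Z1 _ => Finset.sum_eq_zero fun Y2 _ => Finset.sum_eq_zero fun Z2 _ => ?_
  rw [if_neg]
  rintro ⟨⟨g1, g2, h3, h4, h5⟩, h6, h7⟩
  have huK : ((u : ℤ) : ZMod p) ≠ 0 := fun h => hu (K_to_dvd p h)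
  have htK : ((t : ℤ) : ZMod p) = 0 := dvd_to_K p ht
  have hB2 : (B2 : ZMod p) = ((u : ℤ) : ZMod p) := by
    have := dvd_to_K p h7; push_cast at this; linear_combination this
  have hB1B2 : (B1 : ZMod p) * (B2 : ZMod p) = 0 := by
    have := dvd_to_K p (h3_mid p B1 B2 C1 C2 h3); push_cast at this; linear_combination this
  have hB1 : (B1 : ZMod p) = 0 := by
    rcases mul_eq_zero.1 hB1B2 with h | h
    · exact h
    · exact absurd (hB2 ▸ h) huK
  have h4K : (Z1 : ZMod p) * (C1 : ZMod p) = 1 := by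
    have := dvd_to_K p h4; push_cast at this; rw [hB1] at this; linear_combination this
  have h6K : (Z1 : ZMod p) * (B2 : ZMod p) = 0 := by
    have := dvd_to_K p h6; push_cast at this
    rw [ZMod.natCast_self, htK] at this; linear_combination -this
  have hZ1 : (Z1 : ZMod p) = 0 := by
    rcases mul_eq_zero.1 h6K with h | h
    · exact h
    · exact absurd (hB2 ▸ h) huK
  rw [hZ1, zero_mul] at h4K
  exact zero_ne_one h4K

lemma G_caseD (p : ℕ) (hp : p.Prime) (a b u t : ℤ) (ht : ¬ (p : ℤ) ∣ t) (hu : (p : ℤ) ∣ u) :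
    (∑ B1 ∈ Finset.range p, ∑ C1 ∈ Finset.range p, ∑ B2 ∈ Finset.range p, ∑ C2 ∈ Finset.range p, ∑ Y1 ∈ Finset.range p, ∑ Z1 ∈ Finset.range p, ∑ Y2 ∈ Finset.range p, ∑ Z2 ∈ Finset.range p, if (Nat.gcd B1 (Nat.gcd C1 p) = 1 ∧ Nat.gcd B2 (Nat.gcd C2 p) = 1 ∧ ((p : ℤ) * (p : ℤ)) ∣ ((p : ℤ) * (C2 : ℤ) + (B1 : ℤ) * (B2 : ℤ) + (C1 : ℤ) * (p : ℤ)) ∧ (p : ℤ) ∣ ((Y1 : ℤ) * (B1 : ℤ) + (Z1 : ℤ) * (C1 : ℤ) - 1) ∧ (p : ℤ) ∣ ((Y2 : ℤ) * (B2 : ℤ) + (Z2 : ℤ) * (C2 : ℤ) - 1)) ∧ (p : ℤ) ∣ ((Y1 : ℤ) * (p : ℤ) - (Z1 : ℤ) * (B2 : ℤ) - t) ∧ (p : ℤ) ∣ ((B2 : ℤ) - u) then epd p (a * (B1 : ℤ) + b * ((Y2 : ℤ) * (p : ℤ) - (Z2 : ℤ) * (B1 : ℤ))) else 0) = 0 :=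 by
  haveI := Fact.mk hp
  haveI : NeZero p := ⟨hp.pos.ne'⟩
  refine Finset.sum_eq_zero fun B1 _ => Finset.sum_eq_zero fun C1 _ => Finset.sum_eq_zero fun B2 _ => Finset.sum_eq_zero fun C2 _ => Finset.sum_eq_zero fun Y1 _ => Finset.sum_eq_zero fun Z1 _ => Finset.sum_eq_zero fun Y2 _ => Finset.sum_eq_zero fun Z2 _ => ?_
  rw [if_neg]
  rintro ⟨⟨g1, g2, h3, h4, h5⟩, h6, h7⟩
  have htK : ((t : ℤ) : ZMod p) ≠ 0 := fun h => ht (K_to_dvd p h)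
  have huK : ((u : ℤ) : ZMod p) = 0 := dvd_to_K p hu
  have hB2 : (B2 : ZMod p) = 0 := by
    have := dvd_to_K p h7; push_cast at this; rw [huK] at this; linear_combination this
  have h6K : ((t : ℤ) : ZMod p) = 0 := by
    have := dvd_to_K p h6; push_cast at this
    rw [ZMod.natCast_self, hB2] at this; linear_combination -this
  exact htK h6K

lemma G_caseA (p : ℕ) (hp : p.Prime) (a b u t : ℤ) (ht : ¬ (p : ℤ) ∣ t) (hu : ¬ (p : ℤ) ∣ u) :
    (∑ B1 ∈ Finset.range p, ∑ C1 ∈ Finset.range p, ∑ B2 ∈ Finset.range p, ∑ C2 ∈ Finset.range p, ∑ Y1 ∈ Finset.range p, ∑ Z1 ∈ Finset.range p, ∑ Y2 ∈ Finset.range p, ∑ Z2 ∈ Finset.range p, if (Nat.gcd B1 (Nat.gcd C1 p) = 1 ∧ Nat.gcd B2 (Nat.gcd C2 p) = 1 ∧ ((p : ℤ) * (p : ℤ)) ∣ ((p : ℤ) * (C2 : ℤ) + (B1 : ℤ) * (B2 : ℤ) + (C1 : ℤ) * (p : ℤ)) ∧ (p : ℤ) ∣ ((Y1 : ℤ) *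 (B1 : ℤ) + (Z1 : ℤ) * (C1 : ℤ) - 1) ∧ (p : ℤ) ∣ ((Y2 : ℤ) * (B2 : ℤ) + (Z2 : ℤ) * (C2 : ℤ) - 1)) ∧ (p : ℤ) ∣ ((Y1 : ℤ) * (p : ℤ) - (Z1 : ℤ) * (B2 : ℤ) - t) ∧ (p : ℤ) ∣ ((B2 : ℤ) - u) then epd p (a * (B1 : ℤ) + b * ((Y2 : ℤ) * (p : ℤ) - (Z2 : ℤ) * (B1 : ℤ))) else 0) = (p : ℂ) * (p : ℂ) := by
  haveI := Fact.mk hp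
  haveI : NeZero p := ⟨hp.pos.ne'⟩
  have htK : ((t : ℤ) : ZMod p) ≠ 0 := fun h => ht (K_to_dvd p h)
  have huK : ((u : ℤ) : ZMod p) ≠ 0 := fun h => hu (K_to_dvd p h)
  have hc1ne : (-(u : ZMod p) * (t : ZMod p)⁻¹) ≠ 0 := by
    simp only [neg_mul, ne_eq, neg_eq_zero, mul_eq_zero, inv_eq_zero, not_or]
    exact ⟨huK, htK⟩
  have hKv : ∀ w : ZMod p, ((w.val : ℕ) : ZMod p) = w := fun w => by
    rw [ZMod.natCast_val, ZMod.cast_id]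
  have hB1z : ∀ z, z < p → (z : ZMod p) ≠ 0 → (∑ C1 ∈ Finset.range p, ∑ B2 ∈ Finset.range p, ∑ C2 ∈ Finset.range p, ∑ Y1 ∈ Finset.range p, ∑ Z1 ∈ Finset.range p, ∑ Y2 ∈ Finset.range p, ∑ Z2 ∈ Finset.range p, if (Nat.gcd z (Nat.gcd C1 p) = 1 ∧ Nat.gcd B2 (Nat.gcd C2 p) = 1 ∧ ((p : ℤ) * (p : ℤ)) ∣ ((p : ℤ) * (C2 : ℤ) + (z : ℤ) * (B2 : ℤ) + (C1 : ℤ) * (p : ℤ)) ∧ (p : ℤ) ∣ ((Y1 : ℤ) * (z : ℤ) + (Z1 : ℤ) * (C1 : ℤ) - 1) ∧ (p : ℤ) ∣ ((Y2 : ℤ) * (B2 : ℤ) + (Z2 : ℤ) * (C2 : ℤ) - 1)) ∧ (p : ℤ) ∣ ((Y1 : ℤ) * (p : ℤ) - (Z1 : ℤ) * (B2 : ℤ) - t) ∧ (p : ℤ) ∣ ((B2 : ℤ) - u) then epd p (a * (z : ℤ) + b * ((Y2 : ℤ) * (p : ℤ) - (Z2 : ℤ) * (z : ℤ))) else 0)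 = 0 := by
    intro z hz hzn
    refine Finset.sum_eq_zero fun C1 _ => Finset.sum_eq_zero fun B2 _ => Finset.sum_eq_zero fun C2 _ => Finset.sum_eq_zero fun Y1 _ => Finset.sum_eq_zero fun Z1 _ => Finset.sum_eq_zero fun Y2 _ => Finset.sum_eq_zero fun Z2 _ => ?_
    rw [if_neg]
    rintro ⟨⟨g1, g2, h3, h4, h5⟩, h6, h7⟩
    have hB2 : (B2 : ZMod p) = ((u : ℤ) : ZMod p) := by
      have := dvd_to_K p h7; push_cast at this; linear_combination this
    have hB1B2 : (z : ZMod p) * (B2 : ZMod p) = 0 := by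
      have := dvd_to_K p (h3_mid p z B2 C1 C2 h3); push_cast at this; linear_combination this
    rcases mul_eq_zero.1 hB1B2 with h | h
    · exact hzn h
    · exact huK (hB2 ▸ h)
  have hC1z : ∀ z, z < p → (z : ZMod p) ≠ (-(u : ZMod p) * (t : ZMod p)⁻¹) → (∑ B2 ∈ Finset.range p, ∑ C2 ∈ Finset.range p, ∑ Y1 ∈ Finset.range p, ∑ Z1 ∈ Finset.range p, ∑ Y2 ∈ Finset.range p, ∑ Z2 ∈ Finset.range p, if (Nat.gcd (0 : ℕ) (Nat.gcd z p) = 1 ∧ Nat.gcd B2 (Nat.gcd C2 p) = 1 ∧ ((p : ℤ) * (p : ℤ)) ∣ ((p : ℤ) * (C2 : ℤ) + ((0 : ℕ) : ℤ) * (B2 : ℤ) + (z : ℤ) * (p : ℤ)) ∧ (p : ℤ) ∣ ((Y1 : ℤ) * ((0 : ℕ) : ℤ) + (Z1 : ℤ) * (z : ℤ) - 1) ∧ (p : ℤ) ∣ ((Y2 : ℤ) * (B2 : ℤ) + (Z2 : ℤ) * (C2 : ℤ) - 1)) ∧ (p : ℤ) ∣ ((Y1 : ℤ) * (p : ℤ)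 - (Z1 : ℤ) * (B2 : ℤ) - t) ∧ (p : ℤ) ∣ ((B2 : ℤ) - u) then epd p (a * ((0 : ℕ) : ℤ) + b * ((Y2 : ℤ) * (p : ℤ) - (Z2 : ℤ) * ((0 : ℕ) : ℤ))) else 0) = 0 := by
    intro z hz hzn
    refine Finset.sum_eq_zero fun B2 _ => Finset.sum_eq_zero fun C2 _ => Finset.sum_eq_zero fun Y1 _ => Finset.sum_eq_zero fun Z1 _ => Finset.sum_eq_zero fun Y2 _ => Finset.sum_eq_zero fun Z2 _ => ?_
    rw [if_neg]
    rintro ⟨⟨g1, g2, h3, h4, h5⟩, h6, h7⟩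
    have hB2 : (B2 : ZMod p) = ((u : ℤ) : ZMod p) := by
      have := dvd_to_K p h7; push_cast at this; linear_combination this
    have h4K : (Z1 : ZMod p) * (z : ZMod p) = 1 := by
      have := dvd_to_K p h4; push_cast at this; linear_combination this
    have h6K : (Z1 : ZMod p) * (B2 : ZMod p) = -((t : ℤ) : ZMod p) := by
      have := dvd_to_K p h6; push_cast at this
      rw [ZMod.natCast_self] at this; linear_combination -this
    have hZ1ne : (Z1 : ZMod p) ≠ 0 := left_ne_zero_of_mul_eq_one h4K
    have hz1 : (z : ZMod p) * ((t : ℤ) : ZMod p) = -((u : ℤ) : ZMod p) := by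
      apply mul_left_cancel₀ hZ1ne
      rw [hB2] at h6K
      linear_combination ((t : ℤ) : ZMod p) * h4K + h6K
    exact hzn (by field_simp; linear_combination hz1)
  have hB2z : ∀ z, z < p → (z : ZMod p) ≠ (u : ZMod p) → (∑ C2 ∈ Finset.range p, ∑ Y1 ∈ Finset.range p, ∑ Z1 ∈ Finset.range p, ∑ Y2 ∈ Finset.range p, ∑ Z2 ∈ Finset.range p, if (Nat.gcd (0 : ℕ) (Nat.gcd ((-(u : ZMod p) * (t : ZMod p)⁻¹)).val p) = 1 ∧ Nat.gcd z (Nat.gcd C2 p) = 1 ∧ ((p : ℤ) * (p : ℤ)) ∣ ((p : ℤ) * (C2 : ℤ) + ((0 : ℕ) : ℤ) * (z : ℤ) + (((-(u : ZMod p) * (t : ZMod p)⁻¹)).val : ℤ) * (p : ℤ)) ∧ (p : ℤ) ∣ ((Y1 : ℤ) * ((0 : ℕ) : ℤ) + (Z1 : ℤ) * (((-(u : ZMod p) * (t : ZMod p)⁻¹)).val : ℤ) - 1) ∧ (p : ℤ) ∣ ((Y2 : ℤ) * (z : ℤ) + (Z2 : ℤ) * (C2 : ℤ) - 1)) ∧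 (p : ℤ) ∣ ((Y1 : ℤ) * (p : ℤ) - (Z1 : ℤ) * (z : ℤ) - t) ∧ (p : ℤ) ∣ ((z : ℤ) - u) then epd p (a * ((0 : ℕ) : ℤ) + b * ((Y2 : ℤ) * (p : ℤ) - (Z2 : ℤ) * ((0 : ℕ) : ℤ))) else 0) = 0 := by
    intro z hz hzn
    refine Finset.sum_eq_zero fun C2 _ => Finset.sum_eq_zero fun Y1 _ => Finset.sum_eq_zero fun Z1 _ => Finset.sum_eq_zero fun Y2 _ => Finset.sum_eq_zero fun Z2 _ => ?_
    rw [if_neg]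
    rintro ⟨⟨g1, g2, h3, h4, h5⟩, h6, h7⟩
    refine hzn ?_
    have := dvd_to_K p h7; push_cast at this; linear_combination this
  have hC2z : ∀ z, z < p → (z : ZMod p) ≠ -(-(u : ZMod p) * (t : ZMod p)⁻¹) → (∑ Y1 ∈ Finset.range p, ∑ Z1 ∈ Finset.range p, ∑ Y2 ∈ Finset.range p, ∑ Z2 ∈ Finset.range p, if (Nat.gcd (0 : ℕ) (Nat.gcd ((-(u : ZMod p) * (t : ZMod p)⁻¹)).val p) = 1 ∧ Nat.gcd ((u : ZMod p)).val (Nat.gcd z p) = 1 ∧ ((p : ℤ) * (p : ℤ)) ∣ ((p : ℤ) * (z : ℤ) + ((0 : ℕ) : ℤ) * (((u : ZMod p)).val : ℤ) + (((-(u : ZMod p) * (t : ZMod p)⁻¹)).val : ℤ) * (p : ℤ)) ∧ (p : ℤ) ∣ ((Y1 : ℤ) * ((0 : ℕ) : ℤ) + (Z1 : ℤ) * (((-(u : ZMod p) * (t : ZMod p)⁻¹)).val : ℤ) - 1) ∧ (p : ℤ) ∣ ((Y2 : ℤ) * (((u : ZMod p)).val : ℤ) + (Z2 : ℤ) * (z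 : ℤ) - 1)) ∧ (p : ℤ) ∣ ((Y1 : ℤ) * (p : ℤ) - (Z1 : ℤ) * (((u : ZMod p)).val : ℤ) - t) ∧ (p : ℤ) ∣ ((((u : ZMod p)).val : ℤ) - u) then epd p (a * ((0 : ℕ) : ℤ) + b * ((Y2 : ℤ) * (p : ℤ) - (Z2 : ℤ) * ((0 : ℕ) : ℤ))) else 0) = 0 := by
    intro z hz hzn
    refine Finset.sum_eq_zero fun Y1 _ => Finset.sum_eq_zero fun Z1 _ => Finset.sum_eq_zero fun Y2 _ => Finset.sum_eq_zero fun Z2 _ => ?_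
    rw [if_neg]
    rintro ⟨⟨g1, g2, h3, h4, h5⟩, h6, h7⟩
    have hcc := h3_c2c1 p hp.pos _ _ _ _ (by push_cast; ring) h3
    have := dvd_to_K p hcc; push_cast at this; simp only [hKv] at this
    exact hzn (by linear_combination this)
  refine (pin0 p _ hB1z).trans ?_
  refine (pin p ((-(u : ZMod p) * (t : ZMod p)⁻¹)) _ hC1z).trans ?_
  refine (pin p ((u : ZMod p)) _ hB2z).trans ?_
  refine (pin p (-(-(u : ZMod p) * (t : ZMod p)⁻¹)) _ hC2z).trans ?_
  show (∑ Y1 ∈ Finset.range p, ∑ Z1 ∈ Finset.range p, ∑ Y2 ∈ Finset.range p, ∑ Z2 ∈ Finset.range p, if (Nat.gcd (0 : ℕ) (Nat.gcd ((-(u : ZMod p) * (t : ZMod p)⁻¹)).val p) = 1 ∧ Nat.gcd ((u : ZMod p)).val (Nat.gcd (-(-(u : ZMod p) * (t : ZMod p)⁻¹)).val p) = 1 ∧ ((p : ℤ) * (p : ℤ)) ∣ ((p : ℤ) * ((-(-(u : ZMod p) * (t : ZMod p)⁻¹)).val : ℤ) + ((0 : ℕ) : ℤ) * (((u : ZMod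 p)).val : ℤ) + (((-(u : ZMod p) * (t : ZMod p)⁻¹)).val : ℤ) * (p : ℤ)) ∧ (p : ℤ) ∣ ((Y1 : ℤ) * ((0 : ℕ) : ℤ) + (Z1 : ℤ) * (((-(u : ZMod p) * (t : ZMod p)⁻¹)).val : ℤ) - 1) ∧ (p : ℤ) ∣ ((Y2 : ℤ) * (((u : ZMod p)).val : ℤ) + (Z2 : ℤ) * ((-(-(u : ZMod p) * (t : ZMod p)⁻¹)).val : ℤ) - 1)) ∧ (p : ℤ) ∣ ((Y1 : ℤ) * (p : ℤ) - (Z1 : ℤ) * (((u : ZMod p)).val : ℤ) - t) ∧ (p : ℤ) ∣ ((((u : ZMod p)).val : ℤ) - u) then epd p (a * ((0 : ℕ) : ℤ) + b * ((Y2 : ℤ) * (p : ℤ) - (Z2 : ℤ) * ((0 : ℕ) : ℤ))) else 0) = (p : ℂ) * (p : ℂ)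
  refine free_sum p _ _ ?_
  intro Y1 hY1lt
  show (∑ Z1 ∈ Finset.range p, ∑ Y2 ∈ Finset.range p, ∑ Z2 ∈ Finset.range p, if (Nat.gcd (0 : ℕ) (Nat.gcd ((-(u : ZMod p) * (t : ZMod p)⁻¹)).val p) = 1 ∧ Nat.gcd ((u : ZMod p)).val (Nat.gcd (-(-(u : ZMod p) * (t : ZMod p)⁻¹)).val p) = 1 ∧ ((p : ℤ) * (p : ℤ)) ∣ ((p : ℤ) * ((-(-(u : ZMod p) * (t : ZMod p)⁻¹)).val : ℤ) + ((0 : ℕ) : ℤ) * (((u : ZMod p)).val : ℤ) + (((-(u : ZMod p) * (t : ZMod p)⁻¹)).val : ℤ) * (p : ℤ)) ∧ (p : ℤ) ∣ ((Y1 : ℤ) * ((0 : ℕ) : ℤ) + (Z1 : ℤ) * (((-(u : ZMod p) * (t : ZMod p)⁻¹)).val : ℤ) - 1) ∧ (p : ℤ) ∣ ((Y2 : ℤ) * (((u : ZMod p)).val : ℤ) + (Z2 : ℤ) * ((-(-(u : ZMod p) * (t : ZMod p)⁻¹)).val : ℤ) - 1)) ∧ (p : ℤ) ∣ ((Y1 :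 ℤ) * (p : ℤ) - (Z1 : ℤ) * (((u : ZMod p)).val : ℤ) - t) ∧ (p : ℤ) ∣ ((((u : ZMod p)).val : ℤ) - u) then epd p (a * ((0 : ℕ) : ℤ) + b * ((Y2 : ℤ) * (p : ℤ) - (Z2 : ℤ) * ((0 : ℕ) : ℤ))) else 0) = (p : ℂ)
  refine (pin p ((-(u : ZMod p) * (t : ZMod p)⁻¹)⁻¹) _ ?_).trans ?_
  · intro z hz hzn
    refine Finset.sum_eq_zero fun Y2 _ => Finset.sum_eq_zero fun Z2 _ => ?_
    rw [if_neg]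
    rintro ⟨⟨g1, g2, h3, h4, h5⟩, h6, h7⟩
    have h4K : (z : ZMod p) * (-(u : ZMod p) * (t : ZMod p)⁻¹) = 1 := by
      have := dvd_to_K p h4; push_cast at this; simp only [hKv] at this; linear_combination this
    exact hzn (eq_inv_of_mul_eq_one_left h4K)
  show (∑ Y2 ∈ Finset.range p, ∑ Z2 ∈ Finset.range p, if (Nat.gcd (0 : ℕ) (Nat.gcd ((-(u : ZMod p) * (t : ZMod p)⁻¹)).val p) = 1 ∧ Nat.gcd ((u : ZMod p)).val (Nat.gcd (-(-(u : ZMod p) * (t : ZMod p)⁻¹)).val p) = 1 ∧ ((p : ℤ) * (p : ℤ)) ∣ ((p : ℤ) * ((-(-(u : ZMod p) * (t : ZMod p)⁻¹)).val : ℤ) + ((0 : ℕ) : ℤ) * (((u : ZMod p)).val : ℤ) + (((-(u : ZMod p) * (t : ZMod p)⁻¹)).val : ℤ) * (p : ℤ)) ∧ (p : ℤ) ∣ ((Y1 : ℤ) * ((0 : ℕ) : ℤ) + (((-(u : ZMod p) * (t : ZMod p)⁻¹)⁻¹).val : ℤ) * (((-(u : ZMod p) * (t : ZMod p)⁻¹)).val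 : ℤ) - 1) ∧ (p : ℤ) ∣ ((Y2 : ℤ) * (((u : ZMod p)).val : ℤ) + (Z2 : ℤ) * ((-(-(u : ZMod p) * (t : ZMod p)⁻¹)).val : ℤ) - 1)) ∧ (p : ℤ) ∣ ((Y1 : ℤ) * (p : ℤ) - (((-(u : ZMod p) * (t : ZMod p)⁻¹)⁻¹).val : ℤ) * (((u : ZMod p)).val : ℤ) - t) ∧ (p : ℤ) ∣ ((((u : ZMod p)).val : ℤ) - u) then epd p (a * ((0 : ℕ) : ℤ) + b * ((Y2 : ℤ) * (p : ℤ) - (Z2 : ℤ) * ((0 : ℕ) : ℤ))) else 0) = (p : ℂ)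
  refine (free_sum p _ 1 ?_).trans (mul_one _)
  intro Y2 hY2lt
  show (∑ Z2 ∈ Finset.range p, if (Nat.gcd (0 : ℕ) (Nat.gcd ((-(u : ZMod p) * (t : ZMod p)⁻¹)).val p) = 1 ∧ Nat.gcd ((u : ZMod p)).val (Nat.gcd (-(-(u : ZMod p) * (t : ZMod p)⁻¹)).val p) = 1 ∧ ((p : ℤ) * (p : ℤ)) ∣ ((p : ℤ) * ((-(-(u : ZMod p) * (t : ZMod p)⁻¹)).val : ℤ) + ((0 : ℕ) : ℤ) * (((u : ZMod p)).val : ℤ) + (((-(u : ZMod p) * (t : ZMod p)⁻¹)).val : ℤ) * (p : ℤ)) ∧ (p : ℤ) ∣ ((Y1 : ℤ) * ((0 : ℕ) : ℤ) + (((-(u : ZMod p) * (t : ZMod p)⁻¹)⁻¹).val : ℤ) * (((-(u : ZMod p) * (t : ZMod p)⁻¹)).val : ℤ) - 1) ∧ (p : ℤ) ∣ ((Y2 : ℤ) * (((u : ZMod p)).val : ℤ) + (Z2 : ℤ) * ((-(-(u : ZMod p) * (t : ZMod p)⁻¹)).val : ℤ) - 1)) ∧ (p : ℤ) ∣ ((Y1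 : ℤ) * (p : ℤ) - (((-(u : ZMod p) * (t : ZMod p)⁻¹)⁻¹).val : ℤ) * (((u : ZMod p)).val : ℤ) - t) ∧ (p : ℤ) ∣ ((((u : ZMod p)).val : ℤ) - u) then epd p (a * ((0 : ℕ) : ℤ) + b * ((Y2 : ℤ) * (p : ℤ) - (Z2 : ℤ) * ((0 : ℕ) : ℤ))) else 0) = 1
  refine (pin p (((1 - (Y2 : ZMod p) * (u : ZMod p)) * (-(-(u : ZMod p) * (t : ZMod p)⁻¹))⁻¹)) _ ?_).trans ?_
  · intro z hz hzn
    rw [if_neg]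
    rintro ⟨⟨g1, g2, h3, h4, h5⟩, h6, h7⟩
    have h5K : (z : ZMod p) * (-(-(u : ZMod p) * (t : ZMod p)⁻¹)) = 1 - (Y2 : ZMod p) * (u : ZMod p) := by
      have := dvd_to_K p h5; push_cast at this; simp only [hKv] at this; linear_combination this
    refine hzn ?_
    have hnc1 : (-(-(u : ZMod p) * (t : ZMod p)⁻¹)) ≠ 0 := neg_ne_zero.2 hc1ne
    rw [eq_mul_inv_iff_mul_eq₀ hnc1]
    exact h5K
  show (if (Nat.gcd (0 : ℕ) (Nat.gcd ((-(u : ZMod p) * (t : ZMod p)⁻¹)).val p) = 1 ∧ Nat.gcd ((u : ZMod p)).val (Nat.gcd (-(-(u : ZMod p) * (t : ZMod p)⁻¹)).val p) = 1 ∧ ((p : ℤ) * (p : ℤ)) ∣ ((p : ℤ) * ((-(-(u : ZMod p) * (t : ZMod p)⁻¹)).val : ℤ) + ((0 : ℕ) : ℤ) * (((u : ZMod p)).val : ℤ) + (((-(u : ZMod p) * (t : ZMod p)⁻¹)).val : ℤ) * (p : ℤ)) ∧ (p : ℤ) ∣ ((Y1 : ℤ) * ((0 : ℕ) : ℤ)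 + (((-(u : ZMod p) * (t : ZMod p)⁻¹)⁻¹).val : ℤ) * (((-(u : ZMod p) * (t : ZMod p)⁻¹)).val : ℤ) - 1) ∧ (p : ℤ) ∣ ((Y2 : ℤ) * (((u : ZMod p)).val : ℤ) + ((((1 - (Y2 : ZMod p) * (u : ZMod p)) * (-(-(u : ZMod p) * (t : ZMod p)⁻¹))⁻¹)).val : ℤ) * ((-(-(u : ZMod p) * (t : ZMod p)⁻¹)).val : ℤ) - 1)) ∧ (p : ℤ) ∣ ((Y1 : ℤ) * (p : ℤ) - (((-(u : ZMod p) * (t : ZMod p)⁻¹)⁻¹).val : ℤ) * (((u : ZMod p)).val : ℤ) - t) ∧ (p : ℤ) ∣ ((((u : ZMod p)).val : ℤ) - u) then epd p (a * ((0 : ℕ) : ℤ) + b * ((Y2 : ℤ) * (p : ℤ) - ((((1 - (Y2 : ZMod p) * (u : ZMod p)) * (-(-(u : ZMod p) * (t : ZMod p)⁻¹))⁻¹)).val : ℤ) * ((0 : ℕ) : ℤ))) else 0) = 1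
  rw [if_pos ?_]
  · exact epd_of_dvd p hp.pos _ ⟨b * (Y2 : ℤ), by push_cast; ring⟩
  refine ⟨⟨?_, ?_, ?_, ?_, ?_⟩, ?_, ?_⟩
  · rw [gcd3 p hp]
    rintro ⟨-, hC⟩
    simp only [hKv] at hC
    exact hc1ne hC
  · rw [gcd3 p hp]
    rintro ⟨hB, -⟩
    simp only [hKv] at hB
    exact huK hB
  · refine c2c1_h3 p _ _ _ _ (by push_cast; ring) ?_
    refine K_to_dvd p ?_
    push_cast
    simp only [hKv]
    ring
  · refine K_to_dvd p ?_
    push_cast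
    simp only [hKv]
    have h := inv_mul_cancel₀ hc1ne
    linear_combination h
  · refine K_to_dvd p ?_
    push_cast
    simp only [hKv]
    have h := mul_inv_cancel₀ (neg_ne_zero.2 hc1ne)
    linear_combination (1 - (Y2 : ZMod p) * (u : ZMod p)) * h
  · refine K_to_dvd p ?_
    push_cast
    simp only [hKv, ZMod.natCast_self]
    have h : (-(u : ZMod p) * (t : ZMod p)⁻¹) * ((t : ℤ) : ZMod p) = -((u : ℤ) : ZMod p) := by field_simp
    have h2 : (-(u : ZMod p) * (t : ZMod p)⁻¹)⁻¹ * ((u : ℤ) : ZMod p) = -((t : ℤ) : ZMod p) := by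
      apply mul_left_cancel₀ hc1ne
      rw [← mul_assoc, mul_inv_cancel₀ hc1ne, one_mul]
      linear_combination h
    linear_combination -h2
  · refine K_to_dvd p ?_
    push_cast
    simp only [hKv]
    ring

lemma G_caseB (p : ℕ) (hp : p.Prime) (a b u t : ℤ) (ht : (p : ℤ) ∣ t) (hu : (p : ℤ) ∣ u)
    (ha : ¬ (p : ℤ) ∣ a) (hb : ¬ (p : ℤ) ∣ b) :
    (∑ B1 ∈ Finset.range p, ∑ C1 ∈ Finset.range p, ∑ B2 ∈ Finset.range p, ∑ C2 ∈ Finset.range p, ∑ Y1 ∈ Finset.range p, ∑ Z1 ∈ Finset.range p, ∑ Y2 ∈ Finset.range p, ∑ Z2 ∈ Finset.range p, if (Nat.gcd B1 (Nat.gcd C1 p) = 1 ∧ Nat.gcd B2 (Nat.gcd C2 p) = 1 ∧ ((p : ℤ) * (p : ℤ)) ∣ ((p : ℤ) * (C2 : ℤ) + (B1 : ℤ) * (B2 : ℤ) + (C1 : ℤ) * (p : ℤ)) ∧ (p : ℤ) ∣ ((Y1 : ℤ) * (B1 : ℤ) + (Z1 : ℤ) * (C1 : ℤ) - 1) ∧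 (p : ℤ) ∣ ((Y2 : ℤ) * (B2 : ℤ) + (Z2 : ℤ) * (C2 : ℤ) - 1)) ∧ (p : ℤ) ∣ ((Y1 : ℤ) * (p : ℤ) - (Z1 : ℤ) * (B2 : ℤ) - t) ∧ (p : ℤ) ∣ ((B2 : ℤ) - u) then epd p (a * (B1 : ℤ) + b * ((Y2 : ℤ) * (p : ℤ) - (Z2 : ℤ) * (B1 : ℤ))) else 0) = (p : ℂ) * (p : ℂ) * (p : ℂ) := by
  haveI := Fact.mk hp
  haveI : NeZero p := ⟨hp.pos.ne'⟩
  have htK : ((t : ℤ) : ZMod p) = 0 := dvd_to_K p ht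
  have huK : ((u : ℤ) : ZMod p) = 0 := dvd_to_K p hu
  have haK : ((a : ℤ) : ZMod p) ≠ 0 := fun h => ha (K_to_dvd p h)
  have hbK : ((b : ℤ) : ZMod p) ≠ 0 := fun h => hb (K_to_dvd p h)
  have hKv : ∀ w : ZMod p, ((w.val : ℕ) : ZMod p) = w := fun w => by
    rw [ZMod.natCast_val, ZMod.cast_id]
  have hF0 : ∀ C1, C1 < p → (C1 : ZMod p) = 0 → ∀ B1, B1 < p →
      (∑ B2 ∈ Finset.range p, ∑ C2 ∈ Finset.range p, ∑ Y1 ∈ Finset.range p, ∑ Z1 ∈ Finset.range p, ∑ Y2 ∈ Finset.range p, ∑ Z2 ∈ Finset.range p, if (Nat.gcd B1 (Nat.gcd C1 p) = 1 ∧ Nat.gcd B2 (Nat.gcd C2 p) = 1 ∧ ((p : ℤ) * (p : ℤ)) ∣ ((p : ℤ) * (C2 : ℤ) + (B1 : ℤ) * (B2 : ℤ) + (C1 : ℤ) * (p : ℤ)) ∧ (p : ℤ) ∣ ((Y1 : ℤ) * (B1 : ℤ) + (Z1 : ℤ) * (C1 : ℤ) - 1) ∧ (p : ℤ) ∣ ((Y2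 : ℤ) * (B2 : ℤ) + (Z2 : ℤ) * (C2 : ℤ) - 1)) ∧ (p : ℤ) ∣ ((Y1 : ℤ) * (p : ℤ) - (Z1 : ℤ) * (B2 : ℤ) - t) ∧ (p : ℤ) ∣ ((B2 : ℤ) - u) then epd p (a * (B1 : ℤ) + b * ((Y2 : ℤ) * (p : ℤ) - (Z2 : ℤ) * (B1 : ℤ))) else 0) = 0 := by
    intro C1 hC1m hC10 B1 hB1m
    refine Finset.sum_eq_zero fun B2 hmB2 => Finset.sum_eq_zero fun C2 hmC2 => Finset.sum_eq_zero fun Y1 hmY1 => Finset.sum_eq_zero fun Z1 hmZ1 => Finset.sum_eq_zero fun Y2 hmY2 => Finset.sum_eq_zero fun Z2 hmZ2 => ?_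
    rw [if_neg]
    rintro ⟨⟨g1, g2, h3, h4, h5⟩, h6, h7⟩
    have hB2K : (B2 : ZMod p) = 0 := by
      have := dvd_to_K p h7; push_cast at this; rw [huK] at this; linear_combination this
    have hB2n : B2 = 0 := by
      have hv := congrArg ZMod.val hB2K
      rwa [ZMod.val_natCast, Nat.mod_eq_of_lt (Finset.mem_range.1 hmB2), ZMod.val_zero] at hv
    have h0 : (B1 : ℤ) * (B2 : ℤ) = 0 := by rw [hB2n]; push_cast; ring
    have hC2K : (C2 : ZMod p) = 0 := by
      have := dvd_to_K p (h3_c2c1 p hp.pos _ _ _ _ h0 h3); push_cast at this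
      rw [hC10] at this; linear_combination this
    rw [gcd3 p hp] at g2
    exact g2 ⟨hB2K, hC2K⟩
  have hF : ∀ C1, C1 < p → (C1 : ZMod p) ≠ 0 → ∀ B1, B1 < p →
      (∑ B2 ∈ Finset.range p, ∑ C2 ∈ Finset.range p, ∑ Y1 ∈ Finset.range p, ∑ Z1 ∈ Finset.range p, ∑ Y2 ∈ Finset.range p, ∑ Z2 ∈ Finset.range p, if (Nat.gcd B1 (Nat.gcd C1 p) = 1 ∧ Nat.gcd B2 (Nat.gcd C2 p) = 1 ∧ ((p : ℤ) * (p : ℤ)) ∣ ((p : ℤ) * (C2 : ℤ) + (B1 : ℤ) * (B2 : ℤ) + (C1 : ℤ) * (p : ℤ)) ∧ (p : ℤ) ∣ ((Y1 : ℤ) * (B1 : ℤ) + (Z1 : ℤ) * (C1 : ℤ) - 1) ∧ (p : ℤ) ∣ ((Y2 : ℤ) * (B2 : ℤ) + (Z2 : ℤ) * (C2 : ℤ) - 1)) ∧ (p : ℤ) ∣ ((Y1 : ℤ) * (p : ℤ) - (Z1 : ℤ) * (B2 : ℤ) - t) ∧ (p : ℤ) ∣ ((B2 : ℤ) - u) then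 epd p (a * (B1 : ℤ) + b * ((Y2 : ℤ) * (p : ℤ) - (Z2 : ℤ) * (B1 : ℤ))) else 0) = (p : ℂ) * ((p : ℂ) * epd p ((B1 : ℤ) * (a - b * (((-(C1 : ZMod p))⁻¹).val : ℤ)))) := by
    intro C1 hC1m hC1ne B1 hB1m
    refine (pin0 p _ ?_).trans ?_
    · intro z hz hzn
      refine Finset.sum_eq_zero fun C2 _ => Finset.sum_eq_zero fun Y1 _ => Finset.sum_eq_zero fun Z1 _ => Finset.sum_eq_zero fun Y2 _ => Finset.sum_eq_zero fun Z2 _ => ?_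
      rw [if_neg]
      rintro ⟨⟨g1, g2, h3, h4, h5⟩, h6, h7⟩
      refine hzn ?_
      have := dvd_to_K p h7; push_cast at this; rw [huK] at this; linear_combination this
    refine (pin p (-(C1 : ZMod p)) _ ?_).trans ?_
    · intro z hz hzn
      refine Finset.sum_eq_zero fun Y1 _ => Finset.sum_eq_zero fun Z1 _ => Finset.sum_eq_zero fun Y2 _ => Finset.sum_eq_zero fun Z2 _ => ?_
      rw [if_neg]
      rintro ⟨⟨g1, g2, h3, h4, h5⟩, h6, h7⟩
      have h0 : (B1 : ℤ) * (((0 : ℕ) : ℕ) : ℤ) = 0 := by push_cast; ring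
      have := dvd_to_K p (h3_c2c1 p hp.pos _ _ _ _ h0 h3); push_cast at this
      exact hzn (by linear_combination this)
    show (∑ Y1 ∈ Finset.range p, ∑ Z1 ∈ Finset.range p, ∑ Y2 ∈ Finset.range p, ∑ Z2 ∈ Finset.range p, if (Nat.gcd B1 (Nat.gcd C1 p) = 1 ∧ Nat.gcd (0 : ℕ) (Nat.gcd (-(C1 : ZMod p)).val p) = 1 ∧ ((p : ℤ) * (p : ℤ)) ∣ ((p : ℤ) * ((-(C1 : ZMod p)).val : ℤ) + (B1 : ℤ) * ((0 : ℕ) : ℤ) + (C1 : ℤ) * (p : ℤ)) ∧ (p : ℤ) ∣ ((Y1 : ℤ) * (B1 : ℤ) + (Z1 : ℤ) * (C1 : ℤ) - 1) ∧ (p : ℤ) ∣ ((Y2 : ℤ) * ((0 : ℕ) : ℤ) + (Z2 : ℤ) * ((-(C1 : ZMod p)).val : ℤ) - 1)) ∧ (p : ℤ) ∣ ((Y1 : ℤ) * (p : ℤ) - (Z1 : ℤ) * ((0 : ℕ) : ℤ) - t) ∧ (p : ℤ) ∣ (((0 : ℕ) : ℤ) - u) then epd p (a * (B1 : ℤ)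 + b * ((Y2 : ℤ) * (p : ℤ) - (Z2 : ℤ) * (B1 : ℤ))) else 0) = (p : ℂ) * ((p : ℂ) * epd p ((B1 : ℤ) * (a - b * (((-(C1 : ZMod p))⁻¹).val : ℤ))))
    refine free_sum p _ _ ?_
    intro Y1 hY1m
    show (∑ Z1 ∈ Finset.range p, ∑ Y2 ∈ Finset.range p, ∑ Z2 ∈ Finset.range p, if (Nat.gcd B1 (Nat.gcd C1 p) = 1 ∧ Nat.gcd (0 : ℕ) (Nat.gcd (-(C1 : ZMod p)).val p) = 1 ∧ ((p : ℤ) * (p : ℤ)) ∣ ((p : ℤ) * ((-(C1 : ZMod p)).val : ℤ) + (B1 : ℤ) * ((0 : ℕ) : ℤ) + (C1 : ℤ) * (p : ℤ)) ∧ (p : ℤ) ∣ ((Y1 : ℤ) * (B1 : ℤ) + (Z1 : ℤ) * (C1 : ℤ) - 1) ∧ (p : ℤ) ∣ ((Y2 : ℤ) * ((0 : ℕ) : ℤ) + (Z2 : ℤ) * ((-(C1 : ZMod p)).val : ℤ) - 1)) ∧ (p : ℤ) ∣ ((Y1 : ℤ) * (p : ℤ) - (Z1 : ℤ) * ((0 :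 ℕ) : ℤ) - t) ∧ (p : ℤ) ∣ (((0 : ℕ) : ℤ) - u) then epd p (a * (B1 : ℤ) + b * ((Y2 : ℤ) * (p : ℤ) - (Z2 : ℤ) * (B1 : ℤ))) else 0) = (p : ℂ) * epd p ((B1 : ℤ) * (a - b * (((-(C1 : ZMod p))⁻¹).val : ℤ)))
    refine (pin p ((1 - (Y1 : ZMod p) * (B1 : ZMod p)) * (C1 : ZMod p)⁻¹) _ ?_).trans ?_
    · intro z hz hzn
      refine Finset.sum_eq_zero fun Y2 _ => Finset.sum_eq_zero fun Z2 _ => ?_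
      rw [if_neg]
      rintro ⟨⟨g1, g2, h3, h4, h5⟩, h6, h7⟩
      have h4K : (z : ZMod p) * (C1 : ZMod p) = 1 - (Y1 : ZMod p) * (B1 : ZMod p) := by
        have := dvd_to_K p h4; push_cast at this; linear_combination this
      refine hzn ?_
      rw [eq_mul_inv_iff_mul_eq₀ hC1ne]
      exact h4K
    show (∑ Y2 ∈ Finset.range p, ∑ Z2 ∈ Finset.range p, if (Nat.gcd B1 (Nat.gcd C1 p) = 1 ∧ Nat.gcd (0 : ℕ) (Nat.gcd (-(C1 : ZMod p)).val p) = 1 ∧ ((p : ℤ) * (p : ℤ)) ∣ ((p : ℤ) * ((-(C1 : ZMod p)).val : ℤ) + (B1 : ℤ) * ((0 : ℕ) : ℤ) + (C1 : ℤ) * (p : ℤ)) ∧ (p : ℤ) ∣ ((Y1 : ℤ) * (B1 : ℤ) + ((((1 - (Y1 : ZMod p) * (B1 : ZMod p)) * (C1 : ZMod p)⁻¹)).val : ℤ) * (C1 : ℤ) - 1) ∧ (p : ℤ) ∣ ((Y2 : ℤ) * ((0 : ℕ) : ℤ) + (Z2 : ℤ) * ((-(C1 : ZMod p)).val : ℤ)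 - 1)) ∧ (p : ℤ) ∣ ((Y1 : ℤ) * (p : ℤ) - ((((1 - (Y1 : ZMod p) * (B1 : ZMod p)) * (C1 : ZMod p)⁻¹)).val : ℤ) * ((0 : ℕ) : ℤ) - t) ∧ (p : ℤ) ∣ (((0 : ℕ) : ℤ) - u) then epd p (a * (B1 : ℤ) + b * ((Y2 : ℤ) * (p : ℤ) - (Z2 : ℤ) * (B1 : ℤ))) else 0) = (p : ℂ) * epd p ((B1 : ℤ) * (a - b * (((-(C1 : ZMod p))⁻¹).val : ℤ)))
    refine free_sum p _ _ ?_
    intro Y2 hY2m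
    show (∑ Z2 ∈ Finset.range p, if (Nat.gcd B1 (Nat.gcd C1 p) = 1 ∧ Nat.gcd (0 : ℕ) (Nat.gcd (-(C1 : ZMod p)).val p) = 1 ∧ ((p : ℤ) * (p : ℤ)) ∣ ((p : ℤ) * ((-(C1 : ZMod p)).val : ℤ) + (B1 : ℤ) * ((0 : ℕ) : ℤ) + (C1 : ℤ) * (p : ℤ)) ∧ (p : ℤ) ∣ ((Y1 : ℤ) * (B1 : ℤ) + ((((1 - (Y1 : ZMod p) * (B1 : ZMod p)) * (C1 : ZMod p)⁻¹)).val : ℤ) * (C1 : ℤ) - 1) ∧ (p : ℤ) ∣ ((Y2 : ℤ) * ((0 : ℕ) : ℤ) + (Z2 : ℤ) * ((-(C1 : ZMod p)).val : ℤ) - 1)) ∧ (p : ℤ) ∣ ((Y1 : ℤ) * (p : ℤ) - ((((1 - (Y1 : ZMod p) * (B1 : ZMod p)) * (C1 : ZMod p)⁻¹)).val : ℤ) * ((0 : ℕ) : ℤ) - t) ∧ (p : ℤ) ∣ (((0 : ℕ) : ℤ) - u) then epd p (a * (B1 : ℤ) + b * ((Y2 : ℤ) * (p : ℤ) - (Z2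 : ℤ) * (B1 : ℤ))) else 0) = epd p ((B1 : ℤ) * (a - b * (((-(C1 : ZMod p))⁻¹).val : ℤ)))
    refine (pin p ((-(C1 : ZMod p))⁻¹) _ ?_).trans ?_
    · intro z hz hzn
      rw [if_neg]
      rintro ⟨⟨g1, g2, h3, h4, h5⟩, h6, h7⟩
      have h5K : (z : ZMod p) * (-(C1 : ZMod p)) = 1 := by
        have := dvd_to_K p h5; push_cast at this; simp only [hKv] at this; linear_combination this
      exact hzn (eq_inv_of_mul_eq_one_left h5K)
    rw [if_pos ?_]
    · exact epd_congr p hp.pos _ _ ⟨b * (Y2 : ℤ), by push_cast; ring⟩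
    refine ⟨⟨?_, ?_, ?_, ?_, ?_⟩, ?_, ?_⟩
    · rw [gcd3 p hp]
      rintro ⟨-, hC⟩
      exact hC1ne hC
    · rw [gcd3 p hp]
      rintro ⟨-, hC⟩
      simp only [hKv] at hC
      exact hC1ne (neg_eq_zero.1 hC)
    · exact c2c1_h3 p _ _ _ _ (by push_cast; ring)
        (K_to_dvd p (by push_cast; simp only [hKv]; ring))
    · refine K_to_dvd p ?_
      push_cast
      simp only [hKv]
      have h := inv_mul_cancel₀ hC1ne
      linear_combination (1 - (Y1 : ZMod p) * (B1 : ZMod p)) * h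
    · refine K_to_dvd p ?_
      push_cast
      simp only [hKv]
      have h := inv_mul_cancel₀ (neg_ne_zero.2 hC1ne)
      linear_combination h
    · refine K_to_dvd p ?_
      push_cast
      simp only [hKv, ZMod.natCast_self]
      rw [htK]
      ring
    · refine K_to_dvd p ?_
      push_cast
      rw [huK]
      ring
  rw [Finset.sum_comm]
  refine (pin p (-(a : ZMod p)⁻¹ * (b : ZMod p)) _ ?_).trans ?_
  · intro z hz hzn
    by_cases hz0 : (z : ZMod p) = 0
    · exact Finset.sum_eq_zero fun B1 hm => hF0 z hz hz0 B1 (Finset.mem_range.1 hm)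
    · have hrw := Finset.sum_congr rfl (fun B1 hm => hF z hz hz0 B1 (Finset.mem_range.1 hm))
      rw [hrw, ← Finset.mul_sum, ← Finset.mul_sum, geo p hp.pos, if_neg, mul_zero, mul_zero]
      intro hdvd
      have hKd := dvd_to_K p hdvd
      push_cast at hKd
      simp only [hKv] at hKd
      refine hzn ?_
      have hnz : -(z : ZMod p) ≠ 0 := neg_ne_zero.2 hz0
      have h1 : ((a : ℤ) : ZMod p) * (-(z : ZMod p)) = ((b : ℤ) : ZMod p) := by
        have h2 := mul_inv_cancel₀ hnz
        linear_combination (-(z : ZMod p)) * hKd + ((b : ℤ) : ZMod p) * h2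
      have h3 : -(z : ZMod p) = ((a : ℤ) : ZMod p)⁻¹ * ((b : ℤ) : ZMod p) := by
        apply mul_left_cancel₀ haK
        rw [← mul_assoc, mul_inv_cancel₀ haK, one_mul]
        exact h1
      linear_combination -h3
  · have hcne : ((((-(a : ZMod p)⁻¹ * (b : ZMod p)).val : ℕ)) : ZMod p) ≠ 0 := by
      rw [hKv]
      exact mul_ne_zero (neg_ne_zero.2 (inv_ne_zero haK)) hbK
    have hrw := Finset.sum_congr rfl
      (fun B1 hm => hF (-(a : ZMod p)⁻¹ * (b : ZMod p)).val (ZMod.val_lt _) hcne B1 (Finset.mem_range.1 hm))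
    rw [hrw, ← Finset.mul_sum, ← Finset.mul_sum, geo p hp.pos, if_pos ?_]
    · ring
    refine K_to_dvd p ?_
    push_cast
    simp only [hKv]
    rw [neg_mul, neg_neg, mul_inv_rev, inv_inv]
    have h2 := mul_inv_cancel₀ hbK
    linear_combination -((a : ℤ) : ZMod p) * h2

/-- Evaluation of `Ŝ(a,u,t,b,p,p)`. -/
theorem Shat_prime_prime (p : ℕ) (hp : p.Prime) (a b u t : ℤ)
    (hab : Int.gcd (a * b) p = 1) :
    (¬ (p : ℤ) ∣ t → ¬ (p : ℤ) ∣ u → Shat a u t b p p = 1) ∧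
    ((p : ℤ) ∣ t → (p : ℤ) ∣ u → Shat a u t b p p = (p : ℂ)) ∧
    ((p : ℤ) ∣ t → ¬ (p : ℤ) ∣ u → Shat a u t b p p = 0) ∧
    (¬ (p : ℤ) ∣ t → (p : ℤ) ∣ u → Shat a u t b p p = 0) := by
  have hpp : (p : ℂ) * (p : ℂ) ≠ 0 :=
    mul_ne_zero (Nat.cast_ne_zero.2 hp.pos.ne') (Nat.cast_ne_zero.2 hp.pos.ne')
  have hdvd1 : ¬ (p : ℤ) ∣ a := by
    intro h
    have h2 : (p : ℤ) ∣ ((Int.gcd (a * b) p : ℕ) : ℤ) :=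
      Int.dvd_coe_gcd (dvd_mul_of_dvd_left h b) dvd_rfl
    rw [hab] at h2
    have h3 := Int.le_of_dvd one_pos h2
    have h4 := hp.one_lt
    omega
  have hdvd2 : ¬ (p : ℤ) ∣ b := by
    intro h
    have h2 : (p : ℤ) ∣ ((Int.gcd (a * b) p : ℕ) : ℤ) :=
      Int.dvd_coe_gcd (dvd_mul_of_dvd_right h a) dvd_rfl
    rw [hab] at h2
    have h3 := Int.le_of_dvd one_pos h2
    have h4 := hp.one_lt
    omega
  refine ⟨fun h1 h2 => ?_, fun h1 h2 => ?_, fun h1 h2 => ?_, fun h1 h2 => ?_⟩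
  · rw [Shat_eq p hp.pos, G_caseA p hp a b u t h1 h2, inv_mul_cancel₀ hpp]
  · rw [Shat_eq p hp.pos, G_caseB p hp a b u t h1 h2 hdvd1 hdvd2,
      inv_mul_cancel_left₀ hpp]
  · rw [Shat_eq p hp.pos, G_caseC p hp a b u t h1 h2, mul_zero]
  · rw [Shat_eq p hp.pos, G_caseD p hp a b u t h1 h2, mul_zero]
end
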